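/- arXiv:math/0512616 — 4 statements merged into one kernel-verified Lean document; each statement's English description precedes it below -/
import Mathlib

section
/- If P is a lattice-face d-polytope with d ≥ 2, then its projection π(P) ⊂ ℝ^{d−1} is a lattice-face (d−1)-polytope. -/
open MeasureTheory Polynomial

noncomputable section

/-- The lattice points of `ℝ^d`: points all of whose coordinates are integers. -/
def latticePts (d : ℕ) : Set (Fin d → ℝ) := {x | ∀ i, ∃ n : ℤ, x i = (n : ℝ)}

/-- The projection `π^{(d-k)} : ℝ^d → ℝ^k` forgetting the last `d - k` coordinates
(for `k ≤ d`; junk value `0` in out-of-range coordinates otherwise). -/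
def projTo (d k : ℕ) (x : Fin d → ℝ) : Fin k → ℝ :=
  fun i => if h : (i : ℕ) < d then x ⟨(i : ℕ), h⟩ else 0

/-- A polytope with vertex set `V ⊆ ℝ^d` is a lattice-face polytope if for every
`0 ≤ k ≤ d-1` and every `(k+1)`-subset `U ⊆ V`, `π^{(d-k)}(aff(U) ∩ ℤ^d) = ℤ^k`. -/
def IsLatticeFace (d : ℕ) (V : Finset (Fin d → ℝ)) : Prop :=
  ∀ k : ℕ, k < d → ∀ U : Finset (Fin d → ℝ), U ⊆ V → U.card = k + 1 →
    projTo d k '' ((affineSpan ℝ (U : Set (Fin d → ℝ)) : Set (Fin d → ℝ)) ∩ latticePts d)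
      = latticePts k

/-- The last coordinate of a point of `ℝ^d`. -/
def lastCoord (d : ℕ) (x : Fin d → ℝ) : ℝ :=
  if h : 0 < d then x ⟨d - 1, by omega⟩ else 0

/-- The negative boundary `NB(P)`: points of `P` minimizing the last coordinate in
their fiber over `π(P)`. -/
def NB (d : ℕ) (P : Set (Fin d → ℝ)) : Set (Fin d → ℝ) :=
  {x | x ∈ P ∧ ∀ y ∈ P, projTo d (d - 1) y = projTo d (d - 1) x → lastCoord d x ≤ lastCoord d y}

/-- The positive boundary `PB(P)`: points of `P` maximizing the last coordinate in
their fiber over `π(P)`. -/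
def PB (d : ℕ) (P : Set (Fin d → ℝ)) : Set (Fin d → ℝ) :=
  {x | x ∈ P ∧ ∀ y ∈ P, projTo d (d - 1) y = projTo d (d - 1) x → lastCoord d y ≤ lastCoord d x}

/-- `i(P,m)`: the number of lattice points in the dilate `mP`. -/
def ehr (d : ℕ) (P : Set (Fin d → ℝ)) (m : ℕ) : ℕ :=
  (latticePts d ∩ (fun x => (m : ℝ) • x) '' P).ncard

/-- `î(P,m)`: the number of lattice points in the interior of the dilate `mP`. -/
def intEhr (d : ℕ) (P : Set (Fin d → ℝ)) (m : ℕ) : ℕ :=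
  (latticePts d ∩ interior ((fun x => (m : ℝ) • x) '' P)).ncard

/-- The `j`-th coordinate (`0`-indexed) of a point of `ℝ^d`, junk value `0` if `j ≥ d`. -/
def coordN {d : ℕ} (w : Fin d → ℝ) (j : ℕ) : ℝ := if h : j < d then w ⟨j, h⟩ else 0

/-- The vertex occurring in row `p` (0-indexed) of the matrices `X(σ,k)`, `Y(σ,k)`:
vertex `v_{σ(p+1)}` for `p < k`, and `v_{d+1}` for the last row of `X(σ,k)`. -/
def rowVert (d : ℕ) (v : Fin (d + 1) → Fin d → ℝ) (σ : Equiv.Perm (Fin d)) (k p : ℕ) :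
    Fin d → ℝ :=
  if h : p < k ∧ p < d then v (Fin.castSucc (σ ⟨p, h.2⟩)) else v (Fin.last d)

/-- The matrix `X(σ,k)` with rows `(1, x_{σ(i),1},…,x_{σ(i),k})` for `1 ≤ i ≤ k`
followed by `(1, x_{d+1,1},…,x_{d+1,k})`. -/
def Xmat (d : ℕ) (v : Fin (d + 1) → Fin d → ℝ) (σ : Equiv.Perm (Fin d)) (k : ℕ) :
    Matrix (Fin (k + 1)) (Fin (k + 1)) ℝ :=
  Matrix.of fun p q =>
    if (q : ℕ) = 0 then 1 else coordN (rowVert d v σ k (p : ℕ)) ((q : ℕ) - 1)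

/-- The matrix `Y(σ,k)` with rows `(1, x_{σ(i),1},…,x_{σ(i),k-1})` for `1 ≤ i ≤ k`. -/
def Ymat (d : ℕ) (v : Fin (d + 1) → Fin d → ℝ) (σ : Equiv.Perm (Fin d)) (k : ℕ) :
    Matrix (Fin k) (Fin k) ℝ :=
  Matrix.of fun p q =>
    if (q : ℕ) = 0 then 1 else coordN (rowVert d v σ k (p : ℕ)) ((q : ℕ) - 1)

/-- The matrix `X̃(σ,k;x)`: `X(σ,k)` with its last row replaced by `(1, x_1,…,x_k)`. -/
def Xtil (d : ℕ) (v : Fin (d + 1) → Fin d → ℝ) (σ : Equiv.Perm (Fin d)) (k : ℕ)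
    (x : Fin d → ℝ) : Matrix (Fin (k + 1)) (Fin (k + 1)) ℝ :=
  Matrix.of fun p q =>
    if (q : ℕ) = 0 then 1
    else if (p : ℕ) < k then coordN (rowVert d v σ k (p : ℕ)) ((q : ℕ) - 1)
    else coordN x ((q : ℕ) - 1)

/-- `z(σ,k) = det X(σ,k) / det Y(σ,k)`; note `z(σ,0) = 1`. -/
def zc (d : ℕ) (v : Fin (d + 1) → Fin d → ℝ) (σ : Equiv.Perm (Fin d)) (k : ℕ) : ℝ :=
  (Xmat d v σ k).det / (Ymat d v σ k).det

/-- The minor `m(σ,k;j)` of `X̃(σ,k;x)` obtained by deleting the last row and the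
`(j+1)`-st column (it does not depend on `x`). -/
def minorM (d : ℕ) (v : Fin (d + 1) → Fin d → ℝ) (σ : Equiv.Perm (Fin d)) (k j : ℕ) : ℝ :=
  (Matrix.of fun p q : Fin k =>
    Xmat d v σ k (Fin.castSucc p) (if (q : ℕ) < j + 1 then Fin.castSucc q else q.succ)).det

/-- A `d`-simplex with vertices `v_1, …, v_{d+1}` is in general position if its vertices
are affinely independent and for every `0 ≤ k ≤ d-1` and every `(k+1)`-subset `U` of the
vertex set, `π^{(d-k)}(conv U)` is a `k`-simplex. -/
def SimplexGenPos (d : ℕ) (v : Fin (d + 1) → Fin d → ℝ) : Prop :=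
  AffineIndependent ℝ v ∧
    ∀ k : ℕ, k < d → ∀ U : Finset (Fin (d + 1)), U.card = k + 1 →
      affineSpan ℝ (projTo d k '' (v '' (U : Set (Fin (d + 1))))) = ⊤

/-- A lattice-face `d`-simplex, given by its `d+1` affinely independent vertices. -/
def SimplexLatticeFace (d : ℕ) (v : Fin (d + 1) → Fin d → ℝ) : Prop :=
  AffineIndependent ℝ v ∧
    ∀ k : ℕ, k < d → ∀ U : Finset (Fin (d + 1)), U.card = k + 1 →
      projTo d k ''
          ((affineSpan ℝ (v '' (U : Set (Fin (d + 1)))) : Set (Fin d → ℝ)) ∩ latticePts d)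
        = latticePts k

open scoped Classical in
/-- The sign of a facet `F` of `P`: `+1` if `F` has a relative-interior point on the
positive boundary, `-1` if on the negative boundary, `0` otherwise. -/
def facetSign (d : ℕ) (P F : Set (Fin d → ℝ)) : ℝ :=
  if ∃ x ∈ intrinsicInterior ℝ F, x ∈ PB d P then 1
  else if ∃ x ∈ intrinsicInterior ℝ F, x ∈ NB d P then -1
  else 0

/-- The Bernoulli polynomial `B_n(x)`, as a real polynomial. -/
def bernR (n : ℕ) : Polynomial ℝ := (Polynomial.bernoulli n).map (algebraMap ℚ ℝ)

/-- The `k`-th power sum polynomial `P_k(x) = (B_{k+1}(x+1) - B_{k+1}(0))/(k+1)`. -/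
def PkR (k : ℕ) : Polynomial ℝ :=
  Polynomial.C (((k : ℝ) + 1)⁻¹) *
    ((bernR (k + 1)).comp (Polynomial.X + 1) - Polynomial.C ((bernR (k + 1)).eval 0))

/-- The extension of the summation operation: for a polynomial `h(s) = Σ_k h_k s^k`,
`Σ_{s=1}^{u} h := h_0 u + Σ_{k ≥ 1} h_k P_k(u)`, as a polynomial in the upper bound `u`. -/
def extSumPoly (h : Polynomial ℝ) : Polynomial ℝ :=
  Polynomial.C (h.coeff 0) * Polynomial.X +
    ∑ k ∈ Finset.Icc 1 h.natDegree, Polynomial.C (h.coeff k) * PkR k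

/-- `fdPoly n a` is the polynomial (in the first variable `a_1`) expressing
`f_{n+1}(a_1, a 0, a 1, …)`, defined recursively by `f_1(a_1) = a_1` and
`f_d(a_1,…,a_d) = Σ_{s=1}^{a_1} f_{d-1}(a_2 s, a_3, …, a_d)` using the extended sum. -/
def fdPoly : ℕ → (ℕ → ℝ) → Polynomial ℝ
  | 0, _ => Polynomial.X
  | n + 1, a =>
      extSumPoly ((fdPoly n (fun i => a (i + 1))).comp (Polynomial.C (a 0) * Polynomial.X))

/-- `f_d(a_1, …, a_d)` where `a_k = a (k-1)` (0-indexed). -/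
def fd (d : ℕ) (a : ℕ → ℝ) : ℝ := (fdPoly (d - 1) (fun i => a (i + 1))).eval (a 0)

/-- `g_d(b_1, …, b_d) = f_d(b_1/b_0, b_2/b_1, …, b_d/b_{d-1})` where `b_k = b k` and
`b 0 = 1` by convention. -/
def gd (d : ℕ) (b : ℕ → ℝ) : ℝ := fd d (fun i => b (i + 1) / b i)

/-- `x̄` for an integer: `x̄ = x` if `x ≥ 0` and `x̄ = -x-1` if `x < 0`. -/
def barNat (n : ℤ) : ℕ := if 0 ≤ n then n.toNat else (-n - 1).toNat

/-- The half-open segment `Ω(conv(0,x))`: `(0,x]` if `x ≥ 0` and `(x,0]` if `x < 0`. -/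
def hoSeg (x : ℝ) : Set ℝ := if 0 ≤ x then Set.Ioc 0 x else Set.Ioc x 0

/-- The previous coordinate `s_{k-1}` of a point `s ∈ ℝ^d`, with `s_0 = 1`. -/
def sPrev (d : ℕ) (s : Fin d → ℝ) (k : Fin d) : ℝ :=
  if (k : ℕ) = 0 then 1 else s ⟨(k : ℕ) - 1, lt_of_le_of_lt (Nat.sub_le _ _) k.isLt⟩

/-- The nested sum `Σ_{s_1=1}^{⌊a_1 sp⌋¯} Σ_{s_2=1}^{⌊a_2 s_1⌋¯} ⋯ 1` over positive
integers. -/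
def nestedCount : ℕ → (ℕ → ℝ) → ℕ → ℕ
  | 0, _, _ => 1
  | n + 1, a, sp =>
      ∑ s ∈ Finset.Icc 1 (barNat ⌊a 0 * (sp : ℝ)⌋), nestedCount n (fun i => a (i + 1)) s

/-- The nested extended sum `Σ_{s_1=1}^{\bar{a_1 s_0}} ⋯ Σ_{s_d=1}^{\bar{a_d s_{d-1}}} 1`,
as a polynomial in `s_0`, where for positive `s` the bar is `a s` if `a > 0` and
`-a s - 1` if `a < 0`. -/
def barNested : ℕ → (ℕ → ℝ) → Polynomial ℝ
  | 0, _ => 1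
  | n + 1, a =>
      (extSumPoly (barNested n (fun i => a (i + 1)))).comp
        (if 0 < a 0 then Polynomial.C (a 0) * Polynomial.X
         else -(Polynomial.C (a 0) * Polynomial.X) - 1)

/-- Row vertex for the hat matrices: `v_{σ(p+1)}` for `p < d`. -/
def rowVert' (d : ℕ) (v : Fin (d + 1) → Fin d → ℝ) (σ : Equiv.Perm (Fin d)) (p : ℕ) :
    Fin d → ℝ :=
  if h : p < d then v (Fin.castSucc (σ ⟨p, h⟩)) else v (Fin.last d)

/-- The matrix `X̂(σ,k)` with entries `x̂_{σ(p),q} = x_{σ(p),q} - x_{d+1,q}`. -/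
def XhatM (d : ℕ) (v : Fin (d + 1) → Fin d → ℝ) (σ : Equiv.Perm (Fin d)) (k : ℕ) :
    Matrix (Fin k) (Fin k) ℝ :=
  Matrix.of fun p q =>
    coordN (rowVert' d v σ (p : ℕ)) (q : ℕ) - coordN (v (Fin.last d)) (q : ℕ)

/-- The matrix `Ŷ(σ,k)` with rows `(1, x̂_{σ(p),1},…,x̂_{σ(p),k-1})`. -/
def YhatM (d : ℕ) (v : Fin (d + 1) → Fin d → ℝ) (σ : Equiv.Perm (Fin d)) (k : ℕ) :
    Matrix (Fin k) (Fin k) ℝ :=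
  Matrix.of fun p q =>
    if (q : ℕ) = 0 then 1
    else coordN (rowVert' d v σ (p : ℕ)) ((q : ℕ) - 1) - coordN (v (Fin.last d)) ((q : ℕ) - 1)

/-- `ẑ(σ,k) = det X̂(σ,k) / det Ŷ(σ,k)`. -/
def zhat (d : ℕ) (v : Fin (d + 1) → Fin d → ℝ) (σ : Equiv.Perm (Fin d)) (k : ℕ) : ℝ :=
  (XhatM d v σ k).det / (YhatM d v σ k).det

/-- `projTo d k` as a linear map. -/
def projL (d k : ℕ) : (Fin d → ℝ) →ₗ[ℝ] (Fin k → ℝ) where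
  toFun := projTo d k
  map_add' x y := by
    funext i; simp only [projTo, Pi.add_apply]; split <;> simp
  map_smul' c x := by
    funext i; simp only [projTo, Pi.smul_apply, RingHom.id_apply, smul_eq_mul]
    split <;> simp

lemma projL_surjective (d k : ℕ) (hk : k ≤ d) : Function.Surjective (projL d k) := by
  intro y
  refine ⟨fun j => if h : (j : ℕ) < k then y ⟨j, h⟩ else 0, ?_⟩
  funext i
  have hi : (i : ℕ) < d := lt_of_lt_of_le i.isLt hk
  simp only [projL, LinearMap.coe_mk, AddHom.coe_mk, projTo, hi, dif_pos, i.isLt]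

end

theorem projection_of_latticeFace_is_latticeFace
    (d : ℕ) (hd : 2 ≤ d) (V : Finset (Fin d → ℝ))
    (hspan : affineSpan ℝ (V : Set (Fin d → ℝ)) = ⊤)
    (hvert : (V : Set (Fin d → ℝ))
      = Set.extremePoints ℝ (convexHull ℝ (V : Set (Fin d → ℝ))))
    (hLF : IsLatticeFace d V) :
    ∃ W : Finset (Fin (d - 1) → ℝ),
      (W : Set (Fin (d - 1) → ℝ))
          = Set.extremePoints ℝ (projTo d (d - 1) '' convexHull ℝ (V : Set (Fin d → ℝ)))
        ∧ affineSpan ℝ (W : Set (Fin (d - 1) → ℝ)) = ⊤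
        ∧ IsLatticeFace (d - 1) W := by
  classical
  have hP : ∀ x, projL d (d - 1) x = projTo d (d - 1) x := fun _ => rfl
  set S : Set (Fin (d - 1) → ℝ) :=
    projTo d (d - 1) '' convexHull ℝ (V : Set (Fin d → ℝ)) with hSdef
  have hS : S = convexHull ℝ (projTo d (d - 1) '' (V : Set (Fin d → ℝ))) := by
    rw [hSdef]; exact (projL d (d - 1)).image_convexHull _
  set E := Set.extremePoints ℝ S with hEdef
  have hEsub : E ⊆ projTo d (d - 1) '' (V : Set (Fin d → ℝ)) := by
    rw [hEdef, hS]; exact extremePoints_convexHull_subset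
  have hEfin : E.Finite := (V.finite_toSet.image _).subset hEsub
  -- affine span of projected vertices is ⊤
  have hmapspan : affineSpan ℝ (projTo d (d - 1) '' (V : Set (Fin d → ℝ))) = ⊤ := by
    show affineSpan ℝ (⇑(projL d (d - 1)) '' (V : Set (Fin d → ℝ))) = ⊤
    rw [← LinearMap.coe_toAffineMap, ← AffineSubspace.map_span ((projL d (d - 1)).toAffineMap),
      hspan, eq_top_iff]
    intro y _
    obtain ⟨x, hx⟩ := projL_surjective d (d - 1) (Nat.sub_le d 1) y
    exact ⟨x, trivial, hx⟩
  -- S is compact and convex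
  have hScomp : IsCompact S := by
    rw [hS]; exact (V.finite_toSet.image _).isCompact_convexHull (𝕜 := ℝ)
  have hSconv : Convex ℝ S := by rw [hS]; exact convex_convexHull ℝ _
  have hclos : closure (convexHull ℝ E) = S :=
    closure_convexHull_extremePoints hScomp hSconv
  have hSaff : S ⊆ (affineSpan ℝ E : Set (Fin (d - 1) → ℝ)) := by
    rw [← hclos]
    exact closure_minimal (convexHull_subset_affineSpan E)
      (affineSpan ℝ E).closed_of_finiteDimensional
  have hspanE : affineSpan ℝ E = ⊤ := by
    rw [eq_top_iff, ← hmapspan]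
    exact affineSpan_le.2 fun y hy => hSaff (by rw [hS]; exact subset_convexHull ℝ _ hy)
  refine ⟨hEfin.toFinset, by rw [hEfin.coe_toFinset], ?_, ?_⟩
  · rw [hEfin.coe_toFinset]; exact hspanE
  -- lattice-face property
  intro k hk U hU hcard
  have hkd1 : k < d - 1 := hk
  have hkd : k < d := lt_of_lt_of_le hk (Nat.sub_le d 1)
  -- lift the vertices of U to vertices of V
  have hlift : ∀ w ∈ U, ∃ v, v ∈ V ∧ projTo d (d - 1) v = w := by
    intro w hw
    have hwE : w ∈ E := by
      rw [← hEfin.coe_toFinset]; exact_mod_cast hU hw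
    obtain ⟨v, hv, hvw⟩ := hEsub hwE
    exact ⟨v, hv, hvw⟩
  choose! f hfV hfP using hlift
  set U' : Finset (Fin d → ℝ) := U.image f with hU'def
  have hU'sub : U' ⊆ V := by
    rw [hU'def]
    exact Finset.image_subset_iff.2 fun w hw => hfV w hw
  have hinj : Set.InjOn f U := by
    intro w1 h1 w2 h2 hf
    rw [← hfP w1 h1, ← hfP w2 h2, hf]
  have hU'card : U'.card = k + 1 := by
    rw [hU'def, Finset.card_image_of_injOn hinj, hcard]
  have H := hLF k hkd U' hU'sub hU'card
  -- the image of U' under the projection is U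
  have himU : projTo d (d - 1) '' (U' : Set (Fin d → ℝ)) = (U : Set (Fin (d - 1) → ℝ)) := by
    rw [hU'def, Finset.coe_image, ← Set.image_comp]
    apply Set.EqOn.image_eq_self
    intro w hw
    exact hfP w hw
  ext t
  constructor
  · -- easy direction: projection of a lattice point is a lattice point
    rintro ⟨y, ⟨_, hyl⟩, rfl⟩
    intro i
    have hik : (i : ℕ) < d - 1 := lt_trans i.isLt hkd1
    obtain ⟨n, hn⟩ := hyl ⟨i, hik⟩
    exact ⟨n, by simp only [projTo, hik, dif_pos]; exact hn⟩
  · -- hard direction: use the lattice-face property of V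
    intro ht
    rw [← H] at ht
    obtain ⟨x, ⟨hxaff, hxl⟩, rfl⟩ := ht
    refine ⟨projTo d (d - 1) x, ⟨?_, ?_⟩, ?_⟩
    · -- projTo d (d-1) x ∈ affineSpan U
      have : projL d (d - 1) x ∈ (affineSpan ℝ (U' : Set (Fin d → ℝ))).map
          ((projL d (d - 1)).toAffineMap) := ⟨x, hxaff, rfl⟩
      rw [AffineSubspace.map_span, LinearMap.coe_toAffineMap] at this
      have heq : ⇑(projL d (d - 1)) '' (U' : Set (Fin d → ℝ))
          = (U : Set (Fin (d - 1) → ℝ)) := himU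
      rw [heq] at this
      exact this
    · -- lattice point
      intro i
      have hid : (i : ℕ) < d := lt_of_lt_of_le i.isLt (Nat.sub_le d 1)
      obtain ⟨n, hn⟩ := hxl ⟨i, hid⟩
      exact ⟨n, by simp only [projTo, hid, dif_pos]; exact hn⟩
    · -- the projections agree
      funext i
      have hik1 : (i : ℕ) < d - 1 := lt_trans i.isLt hkd1
      have hid : (i : ℕ) < d := by omega
      simp only [projTo, hik1, hid, dif_pos]
end

section
/- Let P be a d-simplex in general position with vertices v_1,…,v_{d+1}, and for 1 ≤ i ≤ d+1 let F_i be the facet of P opposite v_i. Then (i) for every 1 ≤ i ≤ d and every permutation σ ∈ S_d with σ(d) = i, sign(F_i) = sign(det X(σ,d) / det X(σ,d−1)); and (ii) for every σ ∈ S_d, sign(F_{d+1}) = −sign(det X(σ,d) / det Y(σ,d)) = −sign(z(σ,d)). -/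
open MeasureTheory Polynomial

namespace SP
open Matrix

/-- bordered row `(1, x_0, …, x_{k-1})`. -/
def brow {k : ℕ} (x : Fin k → ℝ) : Fin (k + 1) → ℝ :=
  fun q => if (q : ℕ) = 0 then 1 else coordN x ((q : ℕ) - 1)

/-- bordered matrix. -/
def bmat {k : ℕ} (p : Fin (k + 1) → Fin k → ℝ) : Matrix (Fin (k + 1)) (Fin (k + 1)) ℝ :=
  fun i => brow (p i)

lemma bdet_ne_zero {k : ℕ} {p : Fin (k + 1) → Fin k → ℝ} (h : AffineIndependent ℝ p) :
    (bmat p).det ≠ 0 := by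
  intro h0
  obtain ⟨c, hc, hc0⟩ := Matrix.exists_vecMul_eq_zero_iff.mpr h0
  have hrow : ∀ j, ∑ i, c i * bmat p i j = 0 := by
    intro j
    have := congrFun hc0 j
    simpa [Matrix.vecMul, dotProduct] using this
  have hsum : ∑ i, c i = 0 := by
    have := hrow 0
    simpa [bmat, brow] using this
  have hpt : ∑ i, c i • p i = 0 := by
    funext m
    have := hrow m.succ
    simp only [bmat, brow, Fin.val_succ, Nat.succ_ne_zero, if_false, Nat.add_sub_cancel,
      coordN, m.isLt, dif_pos] at this
    simpa [Finset.sum_apply] using this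
  have := affineIndependent_iff.mp h Finset.univ c hsum hpt
  exact hc (funext fun i => this i (Finset.mem_univ i))

lemma affineIndependent_of_span {k : ℕ} {p : Fin (k + 1) → Fin k → ℝ}
    (h : affineSpan ℝ (Set.range p) = ⊤) : AffineIndependent ℝ p := by
  rw [affineIndependent_iff_finrank_vectorSpan_eq ℝ p (n := k) (by simp)]
  rw [← direction_affineSpan, h, AffineSubspace.direction_top]
  simp [Module.finrank_fin_fun]

variable {e : ℕ}

/-- the rows: vertices of the facet followed by the opposite vertex. -/
def rowW (u : Fin (e + 1) → Fin (e + 1) → ℝ) (w : Fin (e + 1) → ℝ) :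
    Fin (e + 2) → Fin (e + 1) → ℝ :=
  fun p => if h : (p : ℕ) < e + 1 then u ⟨p, h⟩ else w

lemma rowW_castSucc (u : Fin (e + 1) → Fin (e + 1) → ℝ) (w : Fin (e + 1) → ℝ)
    (p : Fin (e + 1)) : rowW u w p.castSucc = u p := by
  simp [rowW, Nat.not_lt.mpr (Fin.is_le p)]

lemma rowW_last (u : Fin (e + 1) → Fin (e + 1) → ℝ) (w : Fin (e + 1) → ℝ) :
    rowW u w (Fin.last (e + 1)) = w := by
  simp [rowW]

/-- the affine functional vanishing on the facet. -/
def G (u : Fin (e + 1) → Fin (e + 1) → ℝ) (w z : Fin (e + 1) → ℝ) : ℝ :=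
  ((bmat (rowW u w)).updateRow (Fin.last (e + 1)) (brow z)).det

/-- determinant of the projected facet matrix. -/
def Yd (u : Fin (e + 1) → Fin (e + 1) → ℝ) : ℝ :=
  (bmat (fun p => projTo (e + 1) e (u p))).det

lemma G_self (u : Fin (e + 1) → Fin (e + 1) → ℝ) (w : Fin (e + 1) → ℝ) :
    G u w w = (bmat (rowW u w)).det := by
  have : brow w = bmat (rowW u w) (Fin.last (e + 1)) := by
    show brow w = brow (rowW u w (Fin.last (e + 1)))
    rw [rowW_last]
  rw [G, this, Matrix.updateRow_eq_self]

lemma brow_comb (c : Fin (e + 1) → ℝ) (hc : ∑ i, c i = 1)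
    (pts : Fin (e + 1) → Fin (e + 1) → ℝ) :
    brow (∑ i, c i • pts i) = ∑ i, c i • brow (pts i) := by
  funext q
  rcases Nat.eq_zero_or_pos (q : ℕ) with h0 | h0
  · simp only [brow, h0, if_pos, Finset.sum_apply, Pi.smul_apply, smul_eq_mul]
    simp only [if_pos h0, mul_one]
    exact hc.symm
  · have hq : (q : ℕ) ≠ 0 := Nat.pos_iff_ne_zero.mp h0
    have hlt : (q : ℕ) - 1 < e + 1 := by omega
    simp only [brow, if_neg hq, Finset.sum_apply, Pi.smul_apply, smul_eq_mul,
      coordN, dif_pos hlt]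

lemma G_span (u : Fin (e + 1) → Fin (e + 1) → ℝ) (w : Fin (e + 1) → ℝ) {z : Fin (e + 1) → ℝ}
    (hz : z ∈ affineSpan ℝ (Set.range u)) : G u w z = 0 := by
  obtain ⟨c, hc1, rfl⟩ := eq_affineCombination_of_mem_affineSpan_of_fintype hz
  rw [Finset.univ.affineCombination_eq_linear_combination u c hc1]
  rw [G, brow_comb c hc1 u]
  set c' : Fin (e + 2) → ℝ :=
    fun k => if h : (k : ℕ) < e + 1 then c ⟨k, h⟩ else 0 with hc'
  have hcl : c' (Fin.last (e + 1)) = 0 := dif_neg (by simp)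
  have hcc : ∀ p : Fin (e + 1), c' p.castSucc = c p := by
    intro p
    simp [hc', Nat.not_lt.mpr (Fin.is_le p)]
  have hrows : ∑ i : Fin (e + 1), c i • brow (u i)
      = ∑ k : Fin (e + 2), c' k • bmat (rowW u w) k := by
    conv_rhs => rw [Fin.sum_univ_castSucc]
    rw [hcl, zero_smul, add_zero]
    refine Finset.sum_congr rfl fun p _ => ?_
    rw [hcc p]
    congr 1
    show brow (u p) = brow (rowW u w p.castSucc)
    rw [rowW_castSucc]
  rw [hrows, Matrix.det_updateRow_sum, hcl]
  simp

lemma G_affine (u : Fin (e + 1) → Fin (e + 1) → ℝ) (w : Fin (e + 1) → ℝ)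
    {a b : ℝ} (hab : a + b = 1) (y z : Fin (e + 1) → ℝ) :
    G u w (a • y + b • z) = a * G u w y + b * G u w z := by
  have hb : brow (a • y + b • z) = a • brow y + b • brow z := by
    funext q
    rcases Nat.eq_zero_or_pos (q : ℕ) with h0 | h0
    · simp only [brow, if_pos h0, Pi.add_apply, Pi.smul_apply, smul_eq_mul]
      simp [if_pos h0, hab]
    · have hq : (q : ℕ) ≠ 0 := Nat.pos_iff_ne_zero.mp h0
      have hlt : (q : ℕ) - 1 < e + 1 := by omega
      simp [brow, if_neg hq, coordN, dif_pos hlt, show q ≠ 0 from fun h => hq (by simp [h]),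
          show (q : ℕ) ≤ e + 1 by omega]
  rw [G, hb, Matrix.det_updateRow_add, Matrix.det_updateRow_smul, Matrix.det_updateRow_smul]
  rfl

lemma minor_det (u : Fin (e + 1) → Fin (e + 1) → ℝ) (w : Fin (e + 1) → ℝ) :
    ((bmat (rowW u w)).updateRow (Fin.last (e + 1))
      (Pi.single (Fin.last (e + 1)) 1)).det = Yd u := by
  set A := (bmat (rowW u w)).updateRow (Fin.last (e + 1)) (Pi.single (Fin.last (e + 1)) 1)
    with hA
  have hsub : A.submatrix (Fin.last (e + 1)).succAbove (Fin.last (e + 1)).succAbove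
      = bmat (fun p => projTo (e + 1) e (u p)) := by
    funext p q
    rw [Fin.succAbove_last]
    show A p.castSucc q.castSucc = brow (projTo (e + 1) e (u p)) q
    rw [hA, Matrix.updateRow_ne (Fin.castSucc_lt_last p).ne]
    show brow (rowW u w p.castSucc) q.castSucc = _
    rw [rowW_castSucc]
    rcases Nat.eq_zero_or_pos (q : ℕ) with h0 | h0
    · simp [brow, h0]
    · have hq : (q : ℕ) ≠ 0 := Nat.pos_iff_ne_zero.mp h0
      have h1 : ((q.castSucc : Fin (e + 2)) : ℕ) = (q : ℕ) := rfl
      have hlt : (q : ℕ) - 1 < e := by omega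
      have hlt' : (q : ℕ) - 1 < e + 1 := by omega
      simp only [brow, h1, if_neg hq, coordN, dif_pos hlt, dif_pos hlt', projTo]
  rw [Matrix.det_succ_row A (Fin.last (e + 1)), Finset.sum_eq_single (Fin.last (e + 1))]
  · have hAll : A (Fin.last (e + 1)) (Fin.last (e + 1)) = 1 := by
      rw [hA, Matrix.updateRow_self, Pi.single_eq_same]
    rw [hAll, hsub]
    have : (-1 : ℝ) ^ (((Fin.last (e + 1)) : ℕ) + ((Fin.last (e + 1)) : ℕ)) = 1 :=
      Even.neg_one_pow ⟨(Fin.last (e + 1) : ℕ), rfl⟩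
    rw [this, Yd]
    ring
  · intro j _ hj
    have : A (Fin.last (e + 1)) j = 0 := by
      rw [hA, Matrix.updateRow_self, Pi.single_eq_of_ne hj]
    rw [this]
    ring
  · intro h
    exact absurd (Finset.mem_univ _) h

lemma G_diff (u : Fin (e + 1) → Fin (e + 1) → ℝ) (w : Fin (e + 1) → ℝ)
    {z z' : Fin (e + 1) → ℝ} (hp : projTo (e + 1) e z = projTo (e + 1) e z') :
    G u w z = G u w z' + Yd u * (z (Fin.last e) - z' (Fin.last e)) := by
  have hproj : ∀ m : ℕ, (hm : m < e) → z ⟨m, by omega⟩ = z' ⟨m, by omega⟩ := by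
    intro m hm
    have := congrFun hp ⟨m, hm⟩
    simpa [projTo, dif_pos (show m < e + 1 by omega), show m ≤ e by omega] using this
  have hb : brow z = brow z' + (z (Fin.last e) - z' (Fin.last e)) •
      (Pi.single (Fin.last (e + 1)) 1 : Fin (e + 2) → ℝ) := by
    funext q
    rcases Nat.eq_zero_or_pos (q : ℕ) with h0 | h0
    · have hq : q ≠ Fin.last (e + 1) := by
        intro h; rw [h] at h0; simp [Fin.val_last] at h0
      simp [brow, h0, Pi.single_eq_of_ne hq]
    · have hq : (q : ℕ) ≠ 0 := Nat.pos_iff_ne_zero.mp h0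
      have hlt : (q : ℕ) - 1 < e + 1 := by omega
      rcases eq_or_ne q (Fin.last (e + 1)) with rfl | hqe
      · have : ((Fin.last (e + 1) : Fin (e + 2)) : ℕ) - 1 = e := by simp
        simp only [brow, if_neg hq, coordN, Pi.add_apply, Pi.smul_apply,
          Pi.single_eq_same, smul_eq_mul, mul_one, this]
        rw [dif_pos (Nat.lt_succ_self e), dif_pos (Nat.lt_succ_self e)]
        show z (Fin.last e) = z' (Fin.last e) + (z (Fin.last e) - z' (Fin.last e))
        ring
      · have hme : (q : ℕ) - 1 < e := by
          have : (q : ℕ) < e + 1 := by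
            rcases Nat.lt_or_ge (q : ℕ) (e + 1) with h | h
            · exact h
            · exfalso; apply hqe; apply Fin.ext; have := q.isLt; simp [Fin.val_last]; omega
          omega
        simp only [brow, if_neg hq, coordN, dif_pos hlt, Pi.add_apply, Pi.smul_apply,
          Pi.single_eq_of_ne hqe, smul_eq_mul, mul_zero, add_zero]
        exact hproj _ hme
  rw [G, hb, Matrix.det_updateRow_add, Matrix.det_updateRow_smul, minor_det]
  rw [G]
  ring

lemma lastCoord_succ (x : Fin (e + 1) → ℝ) : lastCoord (e + 1) x = x (Fin.last e) := by
  rw [lastCoord, dif_pos (Nat.succ_pos e)]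
  rfl

lemma exists_lift (u : Fin (e + 1) → Fin (e + 1) → ℝ) (w : Fin (e + 1) → ℝ)
    (hY : Yd u ≠ 0) :
    ∃ wt : Fin (e + 1) → ℝ, wt ∈ affineSpan ℝ (Set.range u) ∧
      projTo (e + 1) e wt = projTo (e + 1) e w := by
  set Y := bmat (fun p => projTo (e + 1) e (u p)) with hYdef
  have hYt : IsUnit (Yᵀ).det := by
    rw [Matrix.det_transpose]; exact isUnit_iff_ne_zero.mpr hY
  set b := brow (projTo (e + 1) e w) with hb
  set c := (Yᵀ)⁻¹ *ᵥ b with hc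
  have hsol : Yᵀ *ᵥ c = b := by
    rw [hc, Matrix.mulVec_mulVec, Matrix.mul_nonsing_inv _ hYt, Matrix.one_mulVec]
  have hcomp : ∀ j, ∑ p, Y p j * c p = b j := by
    intro j
    have := congrFun hsol j
    simpa [Matrix.mulVec, dotProduct, Matrix.transpose_apply, mul_comm] using this
  have hsum : ∑ p, c p = 1 := by
    have := hcomp 0
    simpa [hYdef, bmat, brow, hb] using this
  refine ⟨∑ p, c p • u p, ?_, ?_⟩
  · rw [← Finset.univ.affineCombination_eq_linear_combination u c hsum]
    exact affineCombination_mem_affineSpan hsum u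
  · funext m
    have hml : (m : ℕ) < e := m.isLt
    have hml' : (m : ℕ) < e + 1 := by omega
    have h := hcomp m.succ
    simp only [hYdef, bmat, brow, hb, Fin.val_succ, Nat.succ_ne_zero, if_false,
      Nat.add_sub_cancel, coordN, dif_pos hml, projTo, dif_pos hml'] at h
    simp only [projTo, dif_pos hml', Finset.sum_apply, Pi.smul_apply, smul_eq_mul]
    rw [← h]
    exact Finset.sum_congr rfl fun p _ => mul_comm _ _

lemma lastCoord_sub_lift (u : Fin (e + 1) → Fin (e + 1) → ℝ) (w : Fin (e + 1) → ℝ)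
    (hY : Yd u ≠ 0) {wt : Fin (e + 1) → ℝ} (hmem : wt ∈ affineSpan ℝ (Set.range u))
    (hproj : projTo (e + 1) e wt = projTo (e + 1) e w) :
    w (Fin.last e) - wt (Fin.last e) = G u w w / Yd u := by
  have h1 := G_diff u w (z := w) (z' := wt) hproj.symm
  rw [G_span u w hmem, zero_add] at h1
  rw [h1, mul_comm, mul_div_assoc, div_self hY, mul_one]

lemma fiber_diff (u : Fin (e + 1) → Fin (e + 1) → ℝ) (w : Fin (e + 1) → ℝ)
    (hY : Yd u ≠ 0) {x y : Fin (e + 1) → ℝ}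
    (hx : x ∈ convexHull ℝ (Set.range u))
    (hy : y ∈ convexHull ℝ (insert w (Set.range u)))
    (hproj : projTo (e + 1) e y = projTo (e + 1) e x) :
    ∃ a : ℝ, 0 ≤ a ∧ y (Fin.last e) - x (Fin.last e) = a * (G u w w / Yd u) := by
  rw [convexHull_insert ⟨u 0, Set.mem_range_self 0⟩, mem_convexJoin] at hy
  obtain ⟨w', hw', z, hz, hseg⟩ := hy
  rw [Set.mem_singleton_iff] at hw'
  obtain ⟨a, b, ha, hb, hab, hy⟩ := hseg
  rw [hw'] at hy
  refine ⟨a, ha, ?_⟩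
  have hGz : G u w z = 0 := G_span u w (convexHull_subset_affineSpan _ hz)
  have hGx : G u w x = 0 := G_span u w (convexHull_subset_affineSpan _ hx)
  have hGy : G u w y = a * G u w w := by
    rw [← hy, G_affine u w hab, hGz]; ring
  have hdiff := G_diff u w (z := y) (z' := x) hproj
  rw [hGx, hGy, zero_add] at hdiff
  apply mul_left_cancel₀ hY
  rw [← hdiff]
  field_simp

lemma exists_above (u : Fin (e + 1) → Fin (e + 1) → ℝ) (w : Fin (e + 1) → ℝ)
    (hY : Yd u ≠ 0) (hpos : 0 < G u w w / Yd u) {x : Fin (e + 1) → ℝ}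
    (hx : x ∈ intrinsicInterior ℝ (convexHull ℝ (Set.range u))) :
    ∃ y ∈ convexHull ℝ (insert w (Set.range u)),
      projTo (e + 1) e y = projTo (e + 1) e x ∧ x (Fin.last e) < y (Fin.last e) := by
  obtain ⟨wt, hwt, hwtproj⟩ := exists_lift u w hY
  have hδ := lastCoord_sub_lift u w hY hwt hwtproj
  set F := convexHull ℝ (Set.range u) with hF
  have hspan : affineSpan ℝ F = affineSpan ℝ (Set.range u) := affineSpan_convexHull _
  obtain ⟨z, hz, hzx⟩ := hx
  have hwtS : wt ∈ affineSpan ℝ F := by rw [hspan]; exact hwt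
  have hmem : ∀ t : ℝ, (z : Fin (e + 1) → ℝ) + t • ((z : Fin (e + 1) → ℝ) - wt)
      ∈ affineSpan ℝ F := by
    intro t
    have := AffineSubspace.smul_vsub_vadd_mem (affineSpan ℝ F) t z.2 hwtS z.2
    simpa [vsub_eq_sub, vadd_eq_add, add_comm] using this
  set γ : ℝ → affineSpan ℝ F := fun t => ⟨_, hmem t⟩ with hγ
  have hcont : Continuous γ := by
    apply Continuous.subtype_mk
    continuity
  have hγ0 : γ 0 = z := by
    apply Subtype.ext
    simp [hγ]
  have hnb : γ ⁻¹' interior ((Subtype.val) ⁻¹' F) ∈ nhds (0 : ℝ) :=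
    hcont.continuousAt.preimage_mem_nhds (isOpen_interior.mem_nhds (by rw [hγ0]; exact hz))
  obtain ⟨ε, hε, hball⟩ := Metric.mem_nhds_iff.mp hnb
  have htmem : (ε / 2 : ℝ) ∈ Metric.ball (0 : ℝ) ε := by
    rw [Metric.mem_ball, Real.dist_eq, sub_zero, abs_of_pos (by positivity)]
    linarith
  set t := ε / 2 with hts
  have ht : 0 < t := by positivity
  have hmemF : γ t ∈ interior ((Subtype.val) ⁻¹' F) := hball htmem
  have hx'F : (z : Fin (e + 1) → ℝ) + t • ((z : Fin (e + 1) → ℝ) - wt) ∈ F := by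
    have h' : γ t ∈ (Subtype.val) ⁻¹' F := interior_subset hmemF
    exact h'
  set s := t / (1 + t) with hsdef
  have h1t : (0 : ℝ) < 1 + t := by linarith
  have hs0 : 0 < s := by positivity
  have hs1 : s < 1 := by
    rw [hsdef, div_lt_one h1t]; linarith
  set x' := (z : Fin (e + 1) → ℝ) + t • ((z : Fin (e + 1) → ℝ) - wt) with hx'
  set y := s • w + (1 - s) • x' with hy
  have hyP : y ∈ convexHull ℝ (insert w (Set.range u)) := by
    refine (convex_convexHull ℝ _) ?_ ?_ hs0.le (by linarith) (by ring)
    · exact subset_convexHull ℝ _ (Set.mem_insert _ _)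
    · exact convexHull_mono (Set.subset_insert _ _) hx'F
  have hyeq : y = x + s • (w - wt) := by
    funext i
    rw [← hzx]
    simp only [hy, hx', hsdef, Pi.add_apply, Pi.smul_apply, Pi.sub_apply, smul_eq_mul]
    field_simp
    ring
  have hwproj : ∀ m : ℕ, (hm : m < e) → w ⟨m, by omega⟩ = wt ⟨m, by omega⟩ := by
    intro m hm
    have := congrFun hwtproj ⟨m, hm⟩
    simpa [projTo, dif_pos (show m < e + 1 by omega), show m ≤ e by omega] using this.symm
  refine ⟨y, hyP, ?_, ?_⟩
  · funext m
    have hml : (m : ℕ) < e := m.isLt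
    have hml' : (m : ℕ) < e + 1 := by omega
    simp only [projTo, dif_pos hml', hyeq, Pi.add_apply, Pi.smul_apply, Pi.sub_apply,
      smul_eq_mul]
    rw [hwproj m hml]
    ring
  · have : y (Fin.last e) = x (Fin.last e) + s * (w (Fin.last e) - wt (Fin.last e)) := by
      rw [hyeq]; simp
    rw [this, hδ]
    nlinarith

lemma main (u : Fin (e + 1) → Fin (e + 1) → ℝ) (w : Fin (e + 1) → ℝ)
    (hY : Yd u ≠ 0) (hM : G u w w ≠ 0) :
    facetSign (e + 1) (convexHull ℝ (insert w (Set.range u))) (convexHull ℝ (Set.range u))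
      = - Real.sign (G u w w / Yd u) := by
  have hδ : G u w w / Yd u ≠ 0 := div_ne_zero hM hY
  set F := convexHull ℝ (Set.range u) with hF
  set P := convexHull ℝ (insert w (Set.range u)) with hP
  have hFP : F ⊆ P := convexHull_mono (Set.subset_insert _ _)
  have hFne : F.Nonempty := ⟨u 0, subset_convexHull ℝ _ (Set.mem_range_self 0)⟩
  obtain ⟨x₀, hx₀⟩ := Set.Nonempty.intrinsicInterior (convex_convexHull ℝ _) hFne
  have hx₀F : x₀ ∈ F := intrinsicInterior_subset hx₀
  rcases hδ.lt_or_gt with hneg | hpos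
  · unfold facetSign
    rw [if_pos, Real.sign_of_neg hneg]
    · norm_num
    refine ⟨x₀, hx₀, hFP hx₀F, ?_⟩
    intro y hy hproj
    obtain ⟨a, ha, hae⟩ := fiber_diff u w hY hx₀F hy hproj
    rw [lastCoord_succ, lastCoord_succ]
    nlinarith [mul_nonpos_of_nonneg_of_nonpos ha hneg.le]
  · unfold facetSign
    rw [if_neg, if_pos, Real.sign_of_pos hpos]
    · refine ⟨x₀, hx₀, hFP hx₀F, ?_⟩
      intro y hy hproj
      obtain ⟨a, ha, hae⟩ := fiber_diff u w hY hx₀F hy hproj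
      rw [lastCoord_succ, lastCoord_succ]
      nlinarith [mul_nonneg ha hpos.le]
    · rintro ⟨x, hxi, hxP, hmax⟩
      obtain ⟨y, hyP, hyproj, hlt⟩ := exists_above u w hY hpos hxi
      have := hmax y hyP hyproj
      rw [lastCoord_succ, lastCoord_succ] at this
      linarith


end SP

set_option maxHeartbeats 2000000 in
theorem facetSign_eq_sign_det_ratio
    (d : ℕ) (hd : 1 ≤ d) (v : Fin (d + 1) → Fin d → ℝ) (hGP : SimplexGenPos d v) :
    (∀ i : Fin (d + 1), (i : ℕ) < d → ∀ σ : Equiv.Perm (Fin d),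
        Fin.castSucc (σ ⟨d - 1, by omega⟩) = i →
        facetSign d (convexHull ℝ (Set.range v))
            (convexHull ℝ (v '' {j : Fin (d + 1) | j ≠ i}))
          = Real.sign ((Xmat d v σ d).det / (Xmat d v σ (d - 1)).det))
      ∧ (∀ σ : Equiv.Perm (Fin d),
          facetSign d (convexHull ℝ (Set.range v))
              (convexHull ℝ (v '' {j : Fin (d + 1) | j ≠ Fin.last d}))
            = -Real.sign ((Xmat d v σ d).det / (Ymat d v σ d).det)
          ∧ facetSign d (convexHull ℝ (Set.range v))
              (convexHull ℝ (v '' {j : Fin (d + 1) | j ≠ Fin.last d}))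
            = -Real.sign (zc d v σ d)) := by
  obtain ⟨e, rfl⟩ : ∃ e, d = e + 1 := ⟨d - 1, (Nat.succ_pred_eq_of_pos hd).symm⟩
  obtain ⟨hAI, hGPspan⟩ := hGP
  constructor
  · intro i hi σ hσ
    have hσ' : Fin.castSucc (σ (Fin.last e)) = i := hσ
    set u : Fin (e + 1) → Fin (e + 1) → ℝ := fun p => rowVert (e + 1) v σ e (p : ℕ) with hu
    set w : Fin (e + 1) → ℝ := v i with hw
    have hu1 : ∀ p : Fin (e + 1), (hp : (p : ℕ) < e) →
        u p = v (Fin.castSucc (σ ⟨p, by omega⟩)) := by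
      intro p hp
      simp [hu, rowVert, hp, Nat.not_lt.mpr (Fin.is_le p)]
    have hu2 : ∀ p : Fin (e + 1), ¬ ((p : ℕ) < e) → u p = v (Fin.last (e + 1)) := by
      intro p hp
      simp [hu, rowVert, hp, Nat.not_lt.mpr (Fin.is_le p)]
    have hilast : Fin.last (e + 1) ≠ i := by
      intro h
      have := congrArg Fin.val h
      simp [Fin.val_last] at this
      omega
    have hset1 : v '' {j : Fin (e + 1 + 1) | j ≠ i} = Set.range u := by
      ext x
      constructor
      · rintro ⟨j, hj, rfl⟩
        rcases eq_or_ne j (Fin.last (e + 1)) with rfl | hjl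
        · exact ⟨Fin.last e, hu2 (Fin.last e) (by simp)⟩
        · obtain ⟨j', rfl⟩ := Fin.exists_castSucc_eq.mpr hjl
          set p := σ.symm j' with hp
          have hpne : p ≠ Fin.last e := by
            intro h
            apply hj
            rw [← hσ', ← h]
            simp [hp]
          have hplt : (p : ℕ) < e := by
            have h1 : (p : ℕ) < e + 1 := p.isLt
            have h2 : (p : ℕ) ≠ e := fun h => hpne (Fin.ext h)
            omega
          refine ⟨p, ?_⟩
          rw [hu1 p hplt]
          congr 2
          have : (⟨(p : ℕ), by omega⟩ : Fin (e + 1)) = p := Fin.eta p p.isLt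
          rw [this, hp]
          simp
      · rintro ⟨p, rfl⟩
        by_cases hp : (p : ℕ) < e
        · refine ⟨Fin.castSucc (σ ⟨p, by omega⟩), ?_, (hu1 p hp).symm⟩
          intro h
          rw [← hσ'] at h
          have h2 := σ.injective (Fin.castSucc_injective _ h)
          have h3 : (p : ℕ) = e := by simpa using congrArg Fin.val h2
          omega
        · exact ⟨Fin.last (e + 1), hilast, (hu2 p hp).symm⟩
    have hset2 : Set.range v = insert w (Set.range u) := by
      ext x
      constructor
      · rintro ⟨j, rfl⟩
        rcases eq_or_ne j i with rfl | hj
        · exact Set.mem_insert _ _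
        · exact Set.mem_insert_of_mem _ (hset1 ▸ ⟨j, hj, rfl⟩)
      · intro hx
        rcases Set.mem_insert_iff.mp hx with rfl | ⟨p, rfl⟩
        · exact ⟨i, rfl⟩
        · by_cases hp : (p : ℕ) < e
          · exact ⟨_, (hu1 p hp).symm⟩
          · exact ⟨_, (hu2 p hp).symm⟩
    have hYM : Xmat (e + 1) v σ (e + 1 - 1)
        = SP.bmat (fun p => projTo (e + 1) e (u p)) := by
      funext p q
      show (if (q : ℕ) = 0 then 1
          else coordN (rowVert (e + 1) v σ (e + 1 - 1) (p : ℕ)) ((q : ℕ) - 1))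
        = SP.brow (projTo (e + 1) e (u p)) q
      rw [SP.brow]
      rcases Nat.eq_zero_or_pos (q : ℕ) with h0 | h0
      · simp [h0]
      · have hq : (q : ℕ) ≠ 0 := Nat.pos_iff_ne_zero.mp h0
        have hq1 : (q : ℕ) < e + 1 := q.isLt
        have hlt : (q : ℕ) - 1 < e := by omega
        have hlt' : (q : ℕ) - 1 < e + 1 := by omega
        rw [if_neg hq, if_neg hq]
        have hru : rowVert (e + 1) v σ (e + 1 - 1) (p : ℕ) = u p := rfl
        rw [hru]
        simp [coordN, dif_pos hlt, dif_pos hlt', projTo]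
    set a0 : Fin (e + 2) := ⟨e, by omega⟩ with ha0
    have hane : a0 ≠ Fin.last (e + 1) := by
      intro h
      have := congrArg Fin.val h
      simp [ha0, Fin.val_last] at this
    have hXswap : SP.bmat (SP.rowW u w)
        = (Xmat (e + 1) v σ (e + 1)).submatrix (Equiv.swap a0 (Fin.last (e + 1))) id := by
      funext p q
      have hkey : SP.rowW u w p
          = rowVert (e + 1) v σ (e + 1) ((Equiv.swap a0 (Fin.last (e + 1)) p : Fin (e+2)) : ℕ) := by
        rcases eq_or_ne p a0 with rfl | hpa
        · rw [Equiv.swap_apply_left]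
          have h1 : SP.rowW u w a0 = u ⟨e, by omega⟩ := by
            simp [SP.rowW, ha0]
          rw [h1, hu2 _ (by simp)]
          simp [rowVert, Fin.val_last]
        · rcases eq_or_ne p (Fin.last (e + 1)) with rfl | hpl
          · rw [Equiv.swap_apply_right]
            have h1 : SP.rowW u w (Fin.last (e + 1)) = w := SP.rowW_last u w
            rw [h1]
            have h2 : rowVert (e + 1) v σ (e + 1) ((a0 : Fin (e+2)) : ℕ)
                = v (Fin.castSucc (σ ⟨e, by omega⟩)) := by
              simp [rowVert, ha0]
            rw [h2, hw]
            congr 1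
            rw [← hσ']
            rfl
          · rw [Equiv.swap_apply_of_ne_of_ne hpa hpl]
            have hpe : (p : ℕ) ≠ e := fun h => hpa (Fin.ext h)
            have hpe1 : (p : ℕ) ≠ e + 1 := fun h => hpl (Fin.ext h)
            have hplt : (p : ℕ) < e := by
              have := p.isLt
              omega
            have h1 : SP.rowW u w p = u ⟨p, by omega⟩ := by
              simp [SP.rowW, (show (p : ℕ) < e + 1 by omega)]
            rw [h1, hu1 _ hplt]
            simp [rowVert, (show (p : ℕ) < e + 1 by omega)]
      show SP.brow (SP.rowW u w p) q = _
      rw [hkey]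
      rfl
    have hdetX : (SP.bmat (SP.rowW u w)).det = - (Xmat (e + 1) v σ (e + 1)).det := by
      rw [hXswap, Matrix.det_permute, Equiv.Perm.sign_swap hane]
      simp
    have hY : SP.Yd u ≠ 0 := by
      have hU : (Finset.univ.erase i).card = e + 1 := by
        rw [Finset.card_erase_of_mem (Finset.mem_univ _)]
        simp
      have hspan := hGPspan e (by omega) (Finset.univ.erase i) hU
      have hUset : (↑(Finset.univ.erase i) : Set (Fin (e + 1 + 1)))
          = {j : Fin (e + 1 + 1) | j ≠ i} := by
        ext j; simp
      rw [hUset, hset1, ← Set.range_comp] at hspan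
      exact SP.bdet_ne_zero (SP.affineIndependent_of_span hspan)
    set ρ : Fin (e + 2) → Fin (e + 2) :=
      fun p => if h : (p : ℕ) < e then Fin.castSucc (σ ⟨p, by omega⟩)
        else if (p : ℕ) = e then Fin.last (e + 1) else i
      with hρ
    have hρcast : ∀ (m : ℕ) (h1 : m < e) (h2 : m < e + 1),
        Fin.castSucc (σ ⟨m, h2⟩) ≠ i := by
      intro m h1 h2 h
      rw [← hσ'] at h
      have h3 := σ.injective (Fin.castSucc_injective _ h)
      have h4 : m = e := by simpa using congrArg Fin.val h3
      omega
    have hρinj : Function.Injective ρ := by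
      intro a b hab
      simp only [hρ] at hab
      rcases Nat.lt_or_ge (a : ℕ) e with ha | ha <;>
        rcases Nat.lt_or_ge (b : ℕ) e with hb | hb
      · rw [dif_pos ha, dif_pos hb] at hab
        have h2 := σ.injective (Fin.castSucc_injective _ hab)
        have h3 : (a : ℕ) = (b : ℕ) := by simpa using h2
        exact Fin.ext h3
      · rw [dif_pos ha, dif_neg (show ¬ (b : ℕ) < e by omega)] at hab
        by_cases hbe : (b : ℕ) = e
        · rw [if_pos hbe] at hab
          exact absurd hab (Fin.castSucc_lt_last _).ne
        · rw [if_neg hbe] at hab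
          exact absurd hab (hρcast _ ha _)
      · rw [dif_neg (show ¬ (a : ℕ) < e by omega), dif_pos hb] at hab
        by_cases hae : (a : ℕ) = e
        · rw [if_pos hae] at hab
          exact absurd hab.symm (Fin.castSucc_lt_last _).ne
        · rw [if_neg hae] at hab
          exact absurd hab.symm (hρcast _ hb _)
      · rw [dif_neg (show ¬ (a : ℕ) < e by omega),
            dif_neg (show ¬ (b : ℕ) < e by omega)] at hab
        have ha2 := a.isLt
        have hb2 := b.isLt
        by_cases hae : (a : ℕ) = e <;> by_cases hbe : (b : ℕ) = e
        · exact Fin.ext (by omega)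
        · rw [if_pos hae, if_neg hbe] at hab
          exact absurd hab hilast
        · rw [if_neg hae, if_pos hbe] at hab
          exact absurd hab.symm hilast
        · exact Fin.ext (by omega)
    have hvρ : SP.rowW u w = v ∘ ρ := by
      funext p
      have hp2 := p.isLt
      by_cases h : (p : ℕ) < e
      · have h1 : SP.rowW u w p = u ⟨p, by omega⟩ := by
          simp [SP.rowW, (show (p : ℕ) < e + 1 by omega)]
        rw [h1, hu1 _ h]
        simp [Function.comp, hρ, h]
      · by_cases h2 : (p : ℕ) = e
        · have h1 : SP.rowW u w p = u ⟨p, by omega⟩ := by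
            simp [SP.rowW, (show (p : ℕ) < e + 1 by omega)]
          rw [h1, hu2 _ (by simp [h2])]
          simp [Function.comp, hρ, h, h2]
        · have h1 : SP.rowW u w p = w := by
            have : ¬ ((p : ℕ) < e + 1) := by omega
            simp [SP.rowW, this]
          rw [h1, hw]
          simp [Function.comp, hρ, h, h2]
    have hM : SP.G u w w ≠ 0 := by
      rw [SP.G_self, hvρ]
      exact SP.bdet_ne_zero (hAI.comp_embedding ⟨ρ, hρinj⟩)
    have hmain := SP.main u w hY hM
    have hGval : SP.G u w w = -(Xmat (e + 1) v σ (e + 1)).det := by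
      rw [SP.G_self, hdetX]
    have hYdval : SP.Yd u = (Xmat (e + 1) v σ (e + 1 - 1)).det := by
      show (SP.bmat (fun p => projTo (e + 1) e (u p))).det = _
      rw [hYM]
    rw [hset1, hset2, hmain, hGval, hYdval, neg_div, Real.sign_neg, neg_neg]
  · intro σ
    set u : Fin (e + 1) → Fin (e + 1) → ℝ := fun p => v (Fin.castSucc (σ p)) with hu
    set w : Fin (e + 1) → ℝ := v (Fin.last (e + 1)) with hw
    have hset1 : v '' {j : Fin (e + 1 + 1) | j ≠ Fin.last (e + 1)} = Set.range u := by
      ext x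
      constructor
      · rintro ⟨j, hj, rfl⟩
        obtain ⟨j', rfl⟩ := Fin.exists_castSucc_eq.mpr hj
        exact ⟨σ.symm j', by simp [hu]⟩
      · rintro ⟨p, rfl⟩
        exact ⟨Fin.castSucc (σ p), (Fin.castSucc_lt_last _).ne, rfl⟩
    have hset2 : Set.range v = insert w (Set.range u) := by
      ext x
      constructor
      · rintro ⟨j, rfl⟩
        rcases eq_or_ne j (Fin.last (e + 1)) with rfl | hj
        · exact Set.mem_insert _ _
        · obtain ⟨j', rfl⟩ := Fin.exists_castSucc_eq.mpr hj
          exact Set.mem_insert_of_mem _ ⟨σ.symm j', by simp [hu]⟩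
      · intro hx
        rcases Set.mem_insert_iff.mp hx with rfl | ⟨p, rfl⟩
        · exact ⟨Fin.last (e + 1), rfl⟩
        · exact ⟨Fin.castSucc (σ p), rfl⟩
    have hrow : ∀ p : Fin (e + 2), rowVert (e + 1) v σ (e + 1) (p : ℕ) = SP.rowW u w p := by
      intro p
      by_cases h : (p : ℕ) < e + 1
      · simp [rowVert, SP.rowW, h, hu]
      · simp [rowVert, SP.rowW, h, hw]
    have hXM : Xmat (e + 1) v σ (e + 1) = SP.bmat (SP.rowW u w) := by
      funext p q
      show (if (q : ℕ) = 0 then 1 else coordN (rowVert (e + 1) v σ (e + 1) (p : ℕ)) ((q : ℕ) - 1))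
        = SP.brow (SP.rowW u w p) q
      rw [hrow p, SP.brow]
    have hYM : Ymat (e + 1) v σ (e + 1)
        = SP.bmat (fun p => projTo (e + 1) e (u p)) := by
      funext p q
      show (if (q : ℕ) = 0 then 1 else coordN (rowVert (e + 1) v σ (e + 1) (p : ℕ)) ((q : ℕ) - 1))
        = SP.brow (projTo (e + 1) e (u p)) q
      have hp : (p : ℕ) < e + 1 := p.isLt
      rw [SP.brow]
      rcases Nat.eq_zero_or_pos (q : ℕ) with h0 | h0
      · simp [h0]
      · have hq : (q : ℕ) ≠ 0 := Nat.pos_iff_ne_zero.mp h0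
        have hlt : (q : ℕ) - 1 < e := by omega
        have hlt' : (q : ℕ) - 1 < e + 1 := by omega
        rw [if_neg hq, if_neg hq]
        have : rowVert (e + 1) v σ (e + 1) (p : ℕ) = u p := by
          simp [rowVert, hp, hu]
        rw [this]
        simp [coordN, dif_pos hlt, dif_pos hlt', projTo]
    have hY : SP.Yd u ≠ 0 := by
      have hU : (Finset.univ.erase (Fin.last (e + 1))).card = e + 1 := by
        rw [Finset.card_erase_of_mem (Finset.mem_univ _)]
        simp
      have hspan := hGPspan e (by omega) (Finset.univ.erase (Fin.last (e + 1))) hU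
      have hUset : (↑(Finset.univ.erase (Fin.last (e + 1))) : Set (Fin (e + 1 + 1)))
          = {j : Fin (e + 1 + 1) | j ≠ Fin.last (e + 1)} := by
        ext j; simp
      rw [hUset, hset1, ← Set.range_comp] at hspan
      exact SP.bdet_ne_zero (SP.affineIndependent_of_span hspan)
    set ρ : Fin (e + 2) → Fin (e + 2) :=
      fun p => if h : (p : ℕ) < e + 1 then Fin.castSucc (σ ⟨p, h⟩) else Fin.last (e + 1)
      with hρ
    have hρinj : Function.Injective ρ := by
      intro a b hab
      simp only [hρ] at hab
      rcases Nat.lt_or_ge (a : ℕ) (e + 1) with ha | ha <;>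
        rcases Nat.lt_or_ge (b : ℕ) (e + 1) with hb | hb
      · rw [dif_pos ha, dif_pos hb] at hab
        have h2 := σ.injective (Fin.castSucc_injective _ hab)
        have h3 : (a : ℕ) = (b : ℕ) := by simpa using h2
        exact Fin.ext h3
      · rw [dif_pos ha, dif_neg (by omega)] at hab
        exact absurd hab (Fin.castSucc_lt_last _).ne
      · rw [dif_neg (by omega), dif_pos hb] at hab
        exact absurd hab.symm (Fin.castSucc_lt_last _).ne
      · have ha' := a.isLt
        have hb' := b.isLt
        exact Fin.ext (by omega)
    have hvρ : SP.rowW u w = v ∘ ρ := by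
      funext p
      by_cases h : (p : ℕ) < e + 1 <;> rw [Nat.lt_add_one_iff] at h <;>
        simp [SP.rowW, hρ, h, hu, hw, Function.comp]
    have hM : SP.G u w w ≠ 0 := by
      rw [SP.G_self, hvρ]
      exact SP.bdet_ne_zero (hAI.comp_embedding ⟨ρ, hρinj⟩)
    have hmain := SP.main u w hY hM
    have hGX : SP.G u w w = (Xmat (e + 1) v σ (e + 1)).det := by
      rw [SP.G_self, hXM]
    have hYY : SP.Yd u = (Ymat (e + 1) v σ (e + 1)).det := by
      show (SP.bmat (fun p => projTo (e + 1) e (u p))).det = _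
      rw [hYM]
    constructor
    · rw [hset1, hset2, hmain, hGX, hYY]
    · unfold zc
      rw [hset1, hset2, hmain, hGX, hYY]
end

section
/- Let P be a lattice-face d-simplex with vertices v_1,…,v_{d+1}. Then for every permutation σ ∈ S_d, every 1 ≤ k ≤ d and every 0 ≤ j ≤ k−1, the ratio m(σ,k;j) / det Y(σ,k) is an integer. -/
open MeasureTheory Polynomial

section MyAux

/-- The minor of `X(σ,k)` obtained by deleting the last row and column `q`. -/
noncomputable def Msub (d : ℕ) (v : Fin (d + 1) → Fin d → ℝ) (σ : Equiv.Perm (Fin d))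
    (k : ℕ) (q : Fin (k + 1)) : ℝ :=
  ((Xmat d v σ k).submatrix Fin.castSucc q.succAbove).det

lemma Xtil_det_expand (d : ℕ) (v : Fin (d + 1) → Fin d → ℝ) (σ : Equiv.Perm (Fin d))
    (k : ℕ) (w : Fin d → ℝ) :
    (Xtil d v σ k w).det =
      ∑ q : Fin (k + 1), (-1 : ℝ) ^ (k + (q : ℕ)) *
        (if (q : ℕ) = 0 then 1 else coordN w ((q : ℕ) - 1)) * Msub d v σ k q := by
  rw [Matrix.det_succ_row _ (Fin.last k)]
  simp only [Fin.val_last]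
  refine Finset.sum_congr rfl fun q _ => ?_
  have h1 : Xtil d v σ k w (Fin.last k) q
      = if (q : ℕ) = 0 then 1 else coordN w ((q : ℕ) - 1) := by
    simp only [Xtil, Matrix.of_apply, Fin.val_last, lt_irrefl, if_false]
  have h2 : (Xtil d v σ k w).submatrix (Fin.last k).succAbove q.succAbove
      = (Xmat d v σ k).submatrix Fin.castSucc q.succAbove := by
    rw [Fin.succAbove_last]
    ext p q'
    simp only [Matrix.submatrix_apply, Xtil, Xmat, Matrix.of_apply]
    by_cases hq0 : ((q.succAbove q' : Fin (k + 1)) : ℕ) = 0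
    · simp [hq0]
    · have hp : ((Fin.castSucc p : Fin (k + 1)) : ℕ) < k := by
        simpa using p.isLt
      simp [hq0, hp]
  rw [h1, h2]
  rfl

lemma minor_eq_Msub (d : ℕ) (v : Fin (d + 1) → Fin d → ℝ) (σ : Equiv.Perm (Fin d))
    (k j : ℕ) (hj : j + 1 < k + 1) :
    minorM d v σ k j = Msub d v σ k ⟨j + 1, hj⟩ := by
  have hcol : ∀ q : Fin k, (⟨j + 1, hj⟩ : Fin (k + 1)).succAbove q
      = if (q : ℕ) < j + 1 then Fin.castSucc q else q.succ := by
    intro q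
    by_cases h : (q : ℕ) < j + 1
    · rw [if_pos h, Fin.succAbove, if_pos (by simpa [Fin.lt_def] using h)]
    · rw [if_neg h, Fin.succAbove, if_neg (by simpa [Fin.lt_def] using h)]
  unfold minorM Msub
  have hmeq : (Matrix.of fun p q : Fin k =>
      Xmat d v σ k (Fin.castSucc p) (if (q : ℕ) < j + 1 then Fin.castSucc q else q.succ))
      = (Xmat d v σ k).submatrix Fin.castSucc (⟨j + 1, hj⟩ : Fin (k + 1)).succAbove := by
    ext p q
    show Xmat d v σ k (Fin.castSucc p) (if (q : ℕ) < j + 1 then Fin.castSucc q else q.succ)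
        = Xmat d v σ k (Fin.castSucc p) ((⟨j + 1, hj⟩ : Fin (k + 1)).succAbove q)
    rw [hcol q]
  rw [hmeq]

lemma Msub_last (d : ℕ) (v : Fin (d + 1) → Fin d → ℝ) (σ : Equiv.Perm (Fin d)) (k : ℕ) :
    Msub d v σ k (Fin.last k) = (Ymat d v σ k).det := by
  have hmat : (Xmat d v σ k).submatrix Fin.castSucc (Fin.last k).succAbove
      = Ymat d v σ k := by
    rw [Fin.succAbove_last]
    ext p q
    by_cases hq : (q : ℕ) = 0
    · have hc : q.castSucc = (0 : Fin (k + 1)) := Fin.ext (by simpa using hq)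
      simp [Xmat, Ymat, hq, hc]
    · have hc : ¬ q.castSucc = (0 : Fin (k + 1)) := fun h => hq (by simpa using congrArg Fin.val h)
      simp [Xmat, Ymat, hq, hc]
  unfold Msub
  rw [hmat]

lemma Xtil_det_vanish (d : ℕ) (v : Fin (d + 1) → Fin d → ℝ) (σ : Equiv.Perm (Fin d))
    (k : ℕ) (hkd : k ≤ d) (w : Fin d → ℝ)
    (hw : w ∈ affineSpan ℝ
      (Set.range (fun p : Fin k => v (Fin.castSucc (σ (Fin.castLE hkd p)))))) :
    (Xtil d v σ k w).det = 0 := by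
  set pts : Fin k → (Fin d → ℝ) := fun p => v (Fin.castSucc (σ (Fin.castLE hkd p))) with hpts
  obtain ⟨c, hc1, hcw⟩ := eq_affineCombination_of_mem_affineSpan_of_fintype hw
  rw [Finset.affineCombination_eq_linear_combination _ _ _ hc1] at hcw
  set c' : Fin (k + 1) → ℝ := fun i => if h : (i : ℕ) < k then c ⟨i, h⟩ else 0 with hc'
  have hcoord : ∀ jn : ℕ, coordN w jn = ∑ p' : Fin k, c p' * coordN (pts p') jn := by
    intro jn
    by_cases hjd : jn < d
    · rw [hcw]
      simp [coordN, hjd, Finset.sum_apply]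
    · simp [coordN, hjd]
  have hM : Xtil d v σ k w
      = (Xmat d v σ k).updateRow (Fin.last k) (∑ i, c' i • Xmat d v σ k i) := by
    ext p q
    rcases eq_or_ne p (Fin.last k) with rfl | hp
    · rw [Matrix.updateRow_self]
      have hsum : (∑ i, c' i • Xmat d v σ k i) q
          = ∑ i : Fin (k + 1), c' i * Xmat d v σ k i q := by
        simp [Finset.sum_apply]
      rw [hsum, Fin.sum_univ_castSucc]
      have hlast0 : c' (Fin.last k) = 0 := by simp [hc']
      rw [hlast0, zero_mul, add_zero]
      have hcs : ∀ p' : Fin k, c' (Fin.castSucc p') = c p' := by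
        intro p'
        have : ((Fin.castSucc p' : Fin (k + 1)) : ℕ) < k := p'.isLt
        simp [hc', this]
      have hrow : ∀ p' : Fin k, Xmat d v σ k (Fin.castSucc p') q
          = if (q : ℕ) = 0 then 1 else coordN (pts p') ((q : ℕ) - 1) := by
        intro p'
        have hp' : ((Fin.castSucc p' : Fin (k + 1)) : ℕ) < k := p'.isLt
        have hpd : ((Fin.castSucc p' : Fin (k + 1)) : ℕ) < d := lt_of_lt_of_le hp' hkd
        simp only [Xmat, Matrix.of_apply, rowVert, dif_pos (And.intro hp' hpd)]
        have hfin : (⟨((Fin.castSucc p' : Fin (k + 1)) : ℕ), hpd⟩ : Fin d)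
            = Fin.castLE hkd p' := by
          ext
          simp [Fin.castLE]
        rw [hfin]
      simp only [hcs, hrow]
      have hxt : Xtil d v σ k w (Fin.last k) q
          = if (q : ℕ) = 0 then 1 else coordN w ((q : ℕ) - 1) := by
        simp only [Xtil, Matrix.of_apply]
        have : ¬ (((Fin.last k : Fin (k + 1)) : ℕ) < k) := lt_irrefl k
        simp [this]
      rw [hxt]
      by_cases hq0 : (q : ℕ) = 0
      · simp only [if_pos hq0, mul_one]
        exact hc1.symm
      · simp only [if_neg hq0]
        rw [hcoord]
    · rw [Matrix.updateRow_ne hp]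
      have hpk : (p : ℕ) < k := Fin.val_lt_last hp
      simp only [Xtil, Xmat, Matrix.of_apply, if_pos hpk]
  rw [hM, Matrix.det_updateRow_sum]
  have : c' (Fin.last k) = 0 := by simp [hc']
  rw [this, zero_smul]

end MyAux

theorem minor_ratio_is_integer
    (d : ℕ) (hd : 1 ≤ d) (v : Fin (d + 1) → Fin d → ℝ)
    (hLF : SimplexLatticeFace d v) (σ : Equiv.Perm (Fin d)) (k j : ℕ)
    (hk1 : 1 ≤ k) (hkd : k ≤ d) (hj : j ≤ k - 1) :
    ∃ n : ℤ, minorM d v σ k j / (Ymat d v σ k).det = (n : ℝ) := by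
  by_cases hD : (Ymat d v σ k).det = 0
  · exact ⟨0, by rw [hD, div_zero, Int.cast_zero]⟩
  rcases eq_or_lt_of_le hj with hjk | hjlt
  · -- case j = k - 1 : the minor equals det Y itself
    refine ⟨1, ?_⟩
    have hjlt2 : j + 1 < k + 1 := by omega
    have h1 : minorM d v σ k j = Msub d v σ k ⟨j + 1, hjlt2⟩ :=
      minor_eq_Msub d v σ k j hjlt2
    have h2 : (⟨j + 1, hjlt2⟩ : Fin (k + 1)) = Fin.last k := by
      apply Fin.ext
      simp only [Fin.val_last]
      omega
    rw [h1, h2, Msub_last, div_self hD, Int.cast_one]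
  -- main case : j < k - 1
  have hjk1 : j + 1 < k := by omega
  have hk1d : k - 1 < d := by omega
  have hinj : Function.Injective
      (fun p : Fin k => Fin.castSucc (σ (Fin.castLE hkd p))) := by
    intro a b hab
    have h1 := Fin.castSucc_injective _ hab
    have h2 := σ.injective h1
    exact Fin.ext (by simpa using congrArg Fin.val h2)
  set U : Finset (Fin (d + 1)) :=
    Finset.image (fun p : Fin k => Fin.castSucc (σ (Fin.castLE hkd p))) Finset.univ with hU
  have hUcard : U.card = (k - 1) + 1 := by
    rw [hU, Finset.card_image_of_injective _ hinj, Finset.card_univ, Fintype.card_fin]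
    omega
  have hVU : v '' (U : Set (Fin (d + 1)))
      = Set.range (fun p : Fin k => v (Fin.castSucc (σ (Fin.castLE hkd p)))) := by
    rw [hU, Finset.coe_image, Finset.coe_univ, Set.image_univ, ← Set.range_comp]
    rfl
  have hLFk := hLF.2 (k - 1) hk1d U hUcard
  rw [hVU] at hLFk
  have key : ∀ z : Fin (k - 1) → ℝ, z ∈ latticePts (k - 1) → ∃ m : ℤ,
      (∑ q : Fin k, (-1 : ℝ) ^ (k + (q : ℕ)) *
        (if (q : ℕ) = 0 then 1 else coordN z ((q : ℕ) - 1)) *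
          Msub d v σ k (Fin.castSucc q))
        = (Ymat d v σ k).det * m := by
    intro z hz
    rw [← hLFk] at hz
    obtain ⟨w, hw, hw_proj⟩ := hz
    obtain ⟨hw_span, hw_lat⟩ := hw
    obtain ⟨n, hn⟩ := hw_lat ⟨k - 1, by omega⟩
    refine ⟨-n, ?_⟩
    have hvan := Xtil_det_vanish d v σ k hkd w hw_span
    rw [Xtil_det_expand] at hvan
    simp only [Fin.sum_univ_castSucc] at hvan
    have hlastterm : (-1 : ℝ) ^ (k + ((Fin.last k) : ℕ)) *
        (if ((Fin.last k) : ℕ) = 0 then 1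
          else coordN w (((Fin.last k) : ℕ) - 1)) * Msub d v σ k (Fin.last k)
        = (n : ℝ) * (Ymat d v σ k).det := by
      have hk0 : ¬ ((Fin.last k) : ℕ) = 0 := by
        simp only [Fin.val_last]
        omega
      rw [if_neg hk0, Msub_last]
      have hcoordw : coordN w (((Fin.last k) : ℕ) - 1) = (n : ℝ) := by
        simp only [Fin.val_last, coordN]
        rw [dif_pos (show k - 1 < d by omega)]
        exact hn
      rw [hcoordw]
      have hsign : (-1 : ℝ) ^ (k + ((Fin.last k) : ℕ)) = 1 := by
        rw [Fin.val_last, pow_add, ← mul_pow]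
        norm_num
      rw [hsign, one_mul]
    have hsums : ∀ q : Fin k,
        (-1 : ℝ) ^ (k + ((Fin.castSucc q) : ℕ)) *
          (if ((Fin.castSucc q) : ℕ) = 0 then 1
            else coordN w (((Fin.castSucc q) : ℕ) - 1)) *
          Msub d v σ k (Fin.castSucc q)
        = (-1 : ℝ) ^ (k + (q : ℕ)) *
          (if (q : ℕ) = 0 then 1 else coordN z ((q : ℕ) - 1)) *
          Msub d v σ k (Fin.castSucc q) := by
      intro q
      simp only [Fin.coe_castSucc]
      by_cases hq0 : (q : ℕ) = 0
      · rw [if_pos hq0, if_pos hq0]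
      · rw [if_neg hq0, if_neg hq0]
        have hqk : (q : ℕ) - 1 < k - 1 := by have := q.isLt; omega
        have hqd : (q : ℕ) - 1 < d := by omega
        have h1 : coordN w ((q : ℕ) - 1) = w ⟨(q : ℕ) - 1, hqd⟩ := by
          simp [coordN, hqd]
        have h2 : coordN z ((q : ℕ) - 1) = z ⟨(q : ℕ) - 1, hqk⟩ := by
          simp [coordN, hqk]
        have h3 : w ⟨(q : ℕ) - 1, hqd⟩ = z ⟨(q : ℕ) - 1, hqk⟩ := by
          have := congrFun hw_proj ⟨(q : ℕ) - 1, hqk⟩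
          simpa [projTo, hqd] using this
        rw [h1, h2, h3]
    rw [Finset.sum_congr rfl (fun q _ => hsums q), hlastterm] at hvan
    push_cast
    linarith [hvan]
  have h0mem : (fun _ : Fin (k - 1) => (0 : ℝ)) ∈ latticePts (k - 1) := by
    intro i
    exact ⟨0, by norm_num⟩
  have hδmem : (fun i : Fin (k - 1) => if (i : ℕ) = j then (1 : ℝ) else 0)
      ∈ latticePts (k - 1) := by
    intro i
    by_cases h : (i : ℕ) = j
    · exact ⟨1, by simp [h]⟩
    · exact ⟨0, by simp [h]⟩
  obtain ⟨m0, h0⟩ := key (fun _ : Fin (k - 1) => (0 : ℝ)) h0mem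
  obtain ⟨m1, h1⟩ := key (fun i : Fin (k - 1) => if (i : ℕ) = j then (1 : ℝ) else 0) hδmem
  have hdiff : (∑ q : Fin k, (-1 : ℝ) ^ (k + (q : ℕ)) *
        (if (q : ℕ) = 0 then 1
          else coordN (fun i : Fin (k - 1) => if (i : ℕ) = j then (1 : ℝ) else 0)
            ((q : ℕ) - 1)) * Msub d v σ k (Fin.castSucc q))
      - (∑ q : Fin k, (-1 : ℝ) ^ (k + (q : ℕ)) *
        (if (q : ℕ) = 0 then 1
          else coordN (fun _ : Fin (k - 1) => (0 : ℝ)) ((q : ℕ) - 1)) *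
          Msub d v σ k (Fin.castSucc q))
      = (-1 : ℝ) ^ (k + (j + 1)) * Msub d v σ k (Fin.castSucc ⟨j + 1, hjk1⟩) := by
    rw [← Finset.sum_sub_distrib]
    rw [Finset.sum_eq_single (⟨j + 1, hjk1⟩ : Fin k)]
    · have hco : ((⟨j + 1, hjk1⟩ : Fin k) : ℕ) = j + 1 := rfl
      simp only [hco]
      rw [if_neg (by omega : ¬ (j + 1 = 0)), if_neg (by omega : ¬ (j + 1 = 0))]
      have hz1 : coordN (fun i : Fin (k - 1) => if (i : ℕ) = j then (1 : ℝ) else 0)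
          (j + 1 - 1) = 1 := by
        have hlt : j + 1 - 1 < k - 1 := by omega
        simp only [coordN, dif_pos hlt]
        simp
      have hz0 : coordN (fun _ : Fin (k - 1) => (0 : ℝ)) (j + 1 - 1) = 0 := by
        simp [coordN]
      rw [hz1, hz0]
      ring
    · intro q _ hq
      by_cases hq0 : (q : ℕ) = 0
      · rw [if_pos hq0, if_pos hq0]
        ring
      · rw [if_neg hq0, if_neg hq0]
        have hzq : coordN (fun i : Fin (k - 1) => if (i : ℕ) = j then (1 : ℝ) else 0)
            ((q : ℕ) - 1) = 0 := by
          simp only [coordN]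
          by_cases hlt : (q : ℕ) - 1 < k - 1
          · rw [dif_pos hlt]
            have hne : ¬ (((⟨(q : ℕ) - 1, hlt⟩ : Fin (k - 1)) : ℕ) = j) := by
              intro hcon
              apply hq
              apply Fin.ext
              show (q : ℕ) = j + 1
              have : (q : ℕ) - 1 = j := hcon
              omega
            rw [if_neg hne]
          · rw [dif_neg hlt]
        have hz0q : coordN (fun _ : Fin (k - 1) => (0 : ℝ)) ((q : ℕ) - 1) = 0 := by
          simp [coordN]
        rw [hzq, hz0q]
        ring
    · intro hmem
      exact absurd (Finset.mem_univ _) hmem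
  rw [h0, h1] at hdiff
  have hminor : minorM d v σ k j = Msub d v σ k (Fin.castSucc ⟨j + 1, hjk1⟩) := by
    rw [minor_eq_Msub d v σ k j (by omega)]
    congr 1
  have hsq : (-1 : ℝ) ^ (k + (j + 1)) * (-1 : ℝ) ^ (k + (j + 1)) = 1 := by
    rw [← mul_pow]
    norm_num
  have hM : Msub d v σ k (Fin.castSucc ⟨j + 1, hjk1⟩)
      = ((-1 : ℝ) ^ (k + (j + 1)) * ((m1 : ℝ) - (m0 : ℝ))) * (Ymat d v σ k).det := by
    calc Msub d v σ k (Fin.castSucc ⟨j + 1, hjk1⟩)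
        = ((-1 : ℝ) ^ (k + (j + 1)) * (-1 : ℝ) ^ (k + (j + 1))) *
            Msub d v σ k (Fin.castSucc ⟨j + 1, hjk1⟩) := by rw [hsq, one_mul]
      _ = (-1 : ℝ) ^ (k + (j + 1)) *
            ((Ymat d v σ k).det * (m1 : ℝ) - (Ymat d v σ k).det * (m0 : ℝ)) := by
          rw [mul_assoc, hdiff]
      _ = _ := by ring
  refine ⟨(-1) ^ (k + (j + 1)) * (m1 - m0), ?_⟩
  rw [div_eq_iff hD, hminor, hM]
  push_cast
  ring
end

section
/- Let P be a lattice-face d-simplex with vertices v_1,…,v_{d+1} and let σ ∈ S_d. Then there exists a lattice-preserving affine transformation T_σ : ℝ^d → ℝ^d, of the form T_σ(x) = α_σ + x M_σ with α_σ ∈ ℤ^d and M_σ an upper triangular d×d integer matrix with all diagonal entries equal to 1, such that for every x ∈ ℝ^d and every 1 ≤ k ≤ d, the k-th coordinate of T_σ(x) equals det X̃(σ,k;x) / det Y(σ,k). In particular T_σ is invertible and maps ℤ^d bijectively onto ℤ^d. -/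
open MeasureTheory Polynomial

/-! ### Auxiliary material for Statement 9 -/

noncomputable section LFaux

namespace LFaux

open Matrix

variable {d : ℕ} (v : Fin (d + 1) → Fin d → ℝ) (σ : Equiv.Perm (Fin d))

/-- Cofactor coefficients in the last-row expansion of `Xtil d v σ (m+1)`. -/
def coefC (m : ℕ) (j : Fin (m + 2)) : ℝ :=
  (-1 : ℝ) ^ (m + 1 + (j : ℕ)) *
    ((Xtil d v σ (m + 1) 0).submatrix Fin.castSucc j.succAbove).det

/-- The coefficient of `x i` in the last-row expansion, as a function of `i : ℕ`. -/
def coefA (m i : ℕ) : ℝ :=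
  if h : i + 1 < m + 2 then coefC v σ m ⟨i + 1, h⟩ else 0

lemma coefA_zero (m i : ℕ) (hi : m + 1 ≤ i) : coefA v σ m i = 0 := by
  rw [coefA, dif_neg (by omega)]

lemma submatrix_const (m : ℕ) (x : Fin d → ℝ) (j : Fin (m + 2)) :
    (Xtil d v σ (m + 1) x).submatrix Fin.castSucc j.succAbove
      = (Xtil d v σ (m + 1) 0).submatrix Fin.castSucc j.succAbove := by
  ext p q
  have hp : ((Fin.castSucc p : Fin (m + 2)) : ℕ) < m + 1 := by
    simpa using p.isLt
  simp [Xtil, hp, Nat.le_of_lt_succ p.isLt]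

lemma rowVert_lt (m : ℕ) (hmd : m + 1 ≤ d) (p : Fin (m + 1)) :
    rowVert d v σ (m + 1) (p : ℕ) = v (Fin.castSucc (σ (Fin.castLE hmd p))) := by
  rw [rowVert, dif_pos ⟨p.isLt, by omega⟩]
  congr 2

/-- Truncating a sum over `Fin D` when the coefficients vanish from `m` on. -/
lemma sum_cut {D m : ℕ} (hmd : m ≤ D) (b : ℕ → ℝ) (hb : ∀ i, m ≤ i → b i = 0)
    (x : Fin D → ℝ) :
    ∑ i : Fin D, b (i : ℕ) * x i
      = ∑ q : Fin m, b (q : ℕ) * coordN x (q : ℕ) := by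
  have e1 : ∀ i : Fin D, b (i : ℕ) * x i = (fun t => b t * coordN x t) (i : ℕ) := by
    intro i
    simp [coordN, i.isLt]
  rw [Finset.sum_congr rfl (fun i _ => e1 i),
    Fin.sum_univ_eq_sum_range (fun t => b t * coordN x t) D]
  have e3 : ∑ q : Fin m, b (q : ℕ) * coordN x (q : ℕ)
      = ∑ i ∈ Finset.range m, b i * coordN x i :=
    Fin.sum_univ_eq_sum_range (fun t => b t * coordN x t) m
  rw [e3]
  exact (Finset.sum_subset (Finset.range_subset_range.mpr hmd) (fun i _ hi => by
    rw [hb i (by simpa using hi), zero_mul])).symm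

lemma det_Xtil (m : ℕ) (hmd : m + 1 ≤ d) (x : Fin d → ℝ) :
    (Xtil d v σ (m + 1) x).det
      = coefC v σ m 0 + ∑ i : Fin d, coefA v σ m (i : ℕ) * x i := by
  have h1 : (Xtil d v σ (m + 1) x).det
      = coefC v σ m 0 + ∑ j : Fin (m + 1), coordN x (j : ℕ) * coefC v σ m j.succ := by
    rw [Matrix.det_succ_row (Xtil d v σ (m + 1) x) (Fin.last (m + 1)), Fin.sum_univ_succ]
    congr 1
    · rw [Fin.succAbove_last, submatrix_const, coefC]
      have h0 : (Xtil d v σ (m + 1) x) (Fin.last (m + 1)) 0 = 1 := by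
        simp [Xtil]
      rw [h0]
      simp [Fin.val_last]
    · refine Finset.sum_congr rfl fun j _ => ?_
      rw [Fin.succAbove_last, submatrix_const, coefC]
      have hlast : ¬ ((Fin.last (m + 1) : ℕ) < m + 1) := by simp
      have hentry : (Xtil d v σ (m + 1) x) (Fin.last (m + 1)) j.succ
          = coordN x (j : ℕ) := by
        simp [Xtil, hlast, Fin.val_succ]
      rw [hentry]
      simp only [Fin.val_last, Fin.val_succ]
      ring
  rw [h1]
  congr 1
  rw [sum_cut hmd (fun i => coefA v σ m i) (fun i hi => coefA_zero v σ m i hi) x]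
  refine Finset.sum_congr rfl fun j _ => ?_
  have hA : coefA v σ m (j : ℕ) = coefC v σ m j.succ := by
    rw [coefA, dif_pos (by omega)]
    exact congrArg (coefC v σ m) (Fin.ext (by simp))
  simp [hA, mul_comm]

lemma coefA_last (m : ℕ) : coefA v σ m m = (Ymat d v σ (m + 1)).det := by
  rw [coefA, dif_pos (by omega), coefC]
  have hl : (⟨m + 1, by omega⟩ : Fin (m + 2)) = Fin.last (m + 1) := rfl
  rw [hl, Fin.succAbove_last]
  have hm : ((Xtil d v σ (m + 1) (0 : Fin d → ℝ)).submatrix Fin.castSucc Fin.castSucc)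
      = Ymat d v σ (m + 1) := by
    ext p q
    have hp : ((Fin.castSucc p : Fin (m + 2)) : ℕ) < m + 1 := by simpa using p.isLt
    simp [Xtil, Ymat, hp, Nat.le_of_lt_succ p.isLt]
  rw [hm]
  have hsgn : (-1 : ℝ) ^ (m + 1 + (Fin.last (m + 1) : ℕ)) = 1 := by
    rw [Fin.val_last]
    exact Even.neg_one_pow ⟨m + 1, by ring⟩
  rw [hsgn, one_mul]

lemma vanish_at_vertex (m : ℕ) (hmd : m + 1 ≤ d) (p : Fin (m + 1)) :
    (Xtil d v σ (m + 1) (v (Fin.castSucc (σ (Fin.castLE hmd p))))).det = 0 := by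
  apply Matrix.det_zero_of_row_eq (i := Fin.castSucc p) (j := Fin.last (m + 1))
  · intro h
    have := congrArg Fin.val h
    simp [Fin.val_last] at this
    omega
  · funext q
    have hp : ((Fin.castSucc p : Fin (m + 2)) : ℕ) < m + 1 := by simpa using p.isLt
    have hlast : ¬ ((Fin.last (m + 1) : ℕ) < m + 1) := by simp
    by_cases hq : (q : ℕ) = 0
    · simp [Xtil, hq, (Fin.ext hq : q = 0)]
    · simp only [Xtil, Matrix.of_apply, hq, if_false, hp, if_true, hlast]
      rw [Fin.coe_castSucc, rowVert_lt v σ m hmd p]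

/-- The affine functional `x ↦ c + ∑ i, a i * x i`. -/
def affF {D : ℕ} (a : Fin D → ℝ) (c : ℝ) : (Fin D → ℝ) →ᵃ[ℝ] ℝ where
  toFun := fun x => c + ∑ i, a i * x i
  linear :=
    { toFun := fun x => ∑ i, a i * x i
      map_add' := by
        intro x y
        simp [mul_add, Finset.sum_add_distrib]
      map_smul' := by
        intro r x
        simp only [Pi.smul_apply, smul_eq_mul, RingHom.id_apply, Finset.mul_sum]
        exact Finset.sum_congr rfl fun i _ => by ring }
  map_vadd' := by
    intro pp w
    simp only [LinearMap.coe_mk, AddHom.coe_mk]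
    simp only [vadd_eq_add, Pi.add_apply, mul_add, Finset.sum_add_distrib]
    ring

@[simp] lemma affF_apply {D : ℕ} (a : Fin D → ℝ) (c : ℝ) (x : Fin D → ℝ) :
    affF a c x = c + ∑ i, a i * x i := rfl

lemma vanish_on_span {D : ℕ} (ψ : (Fin D → ℝ) →ᵃ[ℝ] ℝ) {s : Set (Fin D → ℝ)}
    (h : ∀ p ∈ s, ψ p = 0) {w : Fin D → ℝ}
    (hw : w ∈ affineSpan ℝ s) : ψ w = 0 := by
  have h1 : ψ w ∈ (affineSpan ℝ s).map ψ := AffineSubspace.mem_map.mpr ⟨w, hw, rfl⟩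
  rw [AffineSubspace.map_span] at h1
  have h2 : ⇑ψ '' s ⊆ {(0 : ℝ)} := by
    rintro _ ⟨p, hp, rfl⟩
    exact h p hp
  have h3 := affineSpan_mono ℝ h2
  have h4 : ψ w ∈ affineSpan ℝ ({(0 : ℝ)} : Set ℝ) := h3 h1
  rwa [AffineSubspace.mem_affineSpan_singleton] at h4

/-- The vertex subset `{σ(1), …, σ(m+1)}` (as elements of `Fin (d+1)`). -/
def Uset (m : ℕ) (hmd : m + 1 ≤ d) : Finset (Fin (d + 1)) :=
  Finset.image (fun p : Fin (m + 1) => Fin.castSucc (σ (Fin.castLE hmd p))) Finset.univ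

lemma Uset_card (m : ℕ) (hmd : m + 1 ≤ d) : (Uset σ m hmd).card = m + 1 := by
  rw [Uset, Finset.card_image_of_injective _ (fun a b hab => by
    exact Fin.castLE_injective hmd (σ.injective (Fin.castSucc_injective _ hab)))]
  simp

lemma exists_witness (hLF : SimplexLatticeFace d v) (m : ℕ) (hmd : m + 1 ≤ d)
    (y : Fin m → ℝ) (hy : y ∈ latticePts m) :
    ∃ w : Fin d → ℝ,
      w ∈ affineSpan ℝ (v '' ((Uset σ m hmd : Finset (Fin (d + 1))) : Set (Fin (d + 1))))
      ∧ w ∈ latticePts d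
      ∧ ∀ j : Fin m, coordN w (j : ℕ) = y j := by
  have h := hLF.2 m (by omega) (Uset σ m hmd) (Uset_card σ m hmd)
  rw [← h] at hy
  obtain ⟨w, ⟨hw1, hw2⟩, hw3⟩ := hy
  refine ⟨w, hw1, hw2, fun j => ?_⟩
  have hj : (j : ℕ) < d := lt_of_lt_of_le j.isLt (by omega)
  have h5 := congrFun hw3 j
  rw [coordN, dif_pos hj]
  simpa [projTo, hj] using h5

lemma combo_eq_zero (m : ℕ) (hmd : m + 1 ≤ d) {w : Fin d → ℝ}
    (hw : w ∈ affineSpan ℝ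
      (v '' ((Uset σ m hmd : Finset (Fin (d + 1))) : Set (Fin (d + 1))))) :
    coefC v σ m 0 + ∑ i : Fin d, coefA v σ m (i : ℕ) * w i = 0 := by
  have hv : ∀ p ∈ v '' ((Uset σ m hmd : Finset (Fin (d + 1))) : Set (Fin (d + 1))),
      affF (fun i : Fin d => coefA v σ m (i : ℕ)) (coefC v σ m 0) p = 0 := by
    rintro _ ⟨u, hu, rfl⟩
    obtain ⟨p, _, rfl⟩ := Finset.mem_image.mp (Finset.mem_coe.mp hu)
    rw [affF_apply, ← det_Xtil v σ m hmd]
    exact vanish_at_vertex v σ m hmd p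
  have h6 := vanish_on_span _ hv hw
  simpa using h6

lemma zero_mem_lattice (m : ℕ) : (fun _ => (0 : ℝ)) ∈ latticePts m :=
  fun _ => ⟨0, by simp⟩

lemma unit_mem_lattice (m : ℕ) (j0 : ℕ) :
    (fun q : Fin m => if (q : ℕ) = j0 then (1 : ℝ) else 0) ∈ latticePts m := by
  intro i
  refine ⟨if (i : ℕ) = j0 then 1 else 0, ?_⟩
  by_cases h : (i : ℕ) = j0 <;> simp [h]

lemma detY_ne_zero (hLF : SimplexLatticeFace d v) (m : ℕ) (hmd : m + 1 ≤ d) :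
    (Ymat d v σ (m + 1)).det ≠ 0 := by
  intro h0
  obtain ⟨μ, hμne, hμ⟩ := Matrix.exists_mulVec_eq_zero_iff.mpr h0
  have hsum : ∀ x : Fin d → ℝ,
      ∑ i : Fin d, (fun t : ℕ => if h : t + 1 < m + 1 then μ ⟨t + 1, h⟩ else 0) (i : ℕ) * x i
        = ∑ q : Fin m, μ q.succ * coordN x (q : ℕ) := by
    intro x
    rw [sum_cut (show m ≤ d by omega)
      (fun t : ℕ => if h : t + 1 < m + 1 then μ ⟨t + 1, h⟩ else 0)
      (fun i hi => dif_neg (by omega)) x]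
    refine Finset.sum_congr rfl fun q _ => ?_
    refine congrArg (fun t => t * coordN x (q : ℕ)) ?_
    rw [dif_pos (show (q : ℕ) + 1 < m + 1 by omega)]
    exact congrArg μ (Fin.ext (by simp))
  have hvert : ∀ p ∈ v '' ((Uset σ m hmd : Finset (Fin (d + 1))) : Set (Fin (d + 1))),
      affF (fun i : Fin d =>
        (fun t : ℕ => if h : t + 1 < m + 1 then μ ⟨t + 1, h⟩ else 0) (i : ℕ)) (μ 0) p = 0 := by
    rintro _ ⟨u, hu, rfl⟩
    obtain ⟨p, _, rfl⟩ := Finset.mem_image.mp (Finset.mem_coe.mp hu)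
    rw [affF_apply, hsum]
    have hrow := congrFun hμ p
    rw [Matrix.mulVec, dotProduct, Fin.sum_univ_succ] at hrow
    have h00 : Ymat d v σ (m + 1) p 0 = 1 := by simp [Ymat]
    have hYq : ∀ q : Fin m, Ymat d v σ (m + 1) p q.succ
        = coordN (v (Fin.castSucc (σ (Fin.castLE hmd p)))) (q : ℕ) := by
      intro q
      simp only [Ymat, Matrix.of_apply]
      rw [if_neg (by simp), Fin.val_succ, Nat.add_sub_cancel,
        rowVert_lt v σ m hmd p]
    have hq : ∀ q : Fin m, Ymat d v σ (m + 1) p q.succ * μ q.succ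
        = μ q.succ * coordN (v (Fin.castSucc (σ (Fin.castLE hmd p)))) (q : ℕ) := by
      intro q
      rw [hYq q, mul_comm]
    rw [h00, one_mul, Finset.sum_congr rfl (fun q _ => hq q), Pi.zero_apply] at hrow
    exact hrow
  have key : ∀ y ∈ latticePts m,
      μ 0 + ∑ q : Fin m, μ q.succ * y q = 0 := by
    intro y hy
    obtain ⟨w, hw1, _, hw3⟩ := exists_witness v σ hLF m hmd y hy
    have h1 := vanish_on_span _ hvert hw1
    rw [affF_apply, hsum] at h1
    rwa [Finset.sum_congr rfl (fun q _ => by rw [hw3 q])] at h1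
  have h0' : μ 0 = 0 := by
    have h7 := key _ (zero_mem_lattice m)
    simpa using h7
  have hsucc : ∀ j : Fin m, μ j.succ = 0 := by
    intro j
    have h8 := key _ (unit_mem_lattice m (j : ℕ))
    rw [h0', zero_add] at h8
    rw [Finset.sum_eq_single j (fun q _ hqj => by
        rw [if_neg (fun hv' => hqj (Fin.ext hv')), mul_zero])
      (fun hj => absurd (Finset.mem_univ j) hj)] at h8
    simpa using h8
  apply hμne
  funext q
  refine Fin.cases ?_ ?_ q
  · exact h0'
  · exact hsucc

lemma coef_int (hLF : SimplexLatticeFace d v) (m : ℕ) (hmd : m + 1 ≤ d) :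
    (∃ a : ℤ, coefC v σ m 0 = (a : ℝ) * (Ymat d v σ (m + 1)).det) ∧
    ∀ i : Fin d, (i : ℕ) < m →
      ∃ b : ℤ, coefA v σ m (i : ℕ) = (b : ℝ) * (Ymat d v σ (m + 1)).det := by
  set Dy := (Ymat d v σ (m + 1)).det with hDy
  have key : ∀ y ∈ latticePts m, ∃ t : ℤ,
      coefC v σ m 0 + (∑ q : Fin m, coefA v σ m (q : ℕ) * y q) + (t : ℝ) * Dy = 0 := by
    intro y hy
    obtain ⟨w, hw1, hw2, hw3⟩ := exists_witness v σ hLF m hmd y hy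
    have h0 := combo_eq_zero v σ m hmd hw1
    rw [sum_cut hmd (fun i => coefA v σ m i)
      (fun i hi => coefA_zero v σ m i hi) w, Fin.sum_univ_castSucc] at h0
    simp only [Fin.coe_castSucc, Fin.val_last] at h0
    obtain ⟨t, ht⟩ := hw2 ⟨m, by omega⟩
    have hwm : coordN w m = (t : ℝ) := by
      rw [coordN, dif_pos (show m < d by omega)]
      exact ht
    rw [coefA_last, hwm,
      Finset.sum_congr rfl (fun q _ => by rw [hw3 q])] at h0
    refine ⟨t, ?_⟩
    rw [← hDy] at h0
    linear_combination h0
  obtain ⟨t0, ht0⟩ := key _ (zero_mem_lattice m)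
  simp only [mul_zero, Finset.sum_const_zero, add_zero] at ht0
  have hC : coefC v σ m 0 = -(t0 : ℝ) * Dy := by linear_combination ht0
  constructor
  · exact ⟨-t0, by push_cast; linear_combination ht0⟩
  · intro i hi
    obtain ⟨t1, ht1⟩ := key _ (unit_mem_lattice m (i : ℕ))
    rw [Finset.sum_eq_single (⟨(i : ℕ), hi⟩ : Fin m)
      (fun q _ hqj => by
        rw [if_neg (fun hv' => hqj (Fin.ext hv')), mul_zero])
      (fun hj => absurd (Finset.mem_univ _) hj)] at ht1
    norm_num at ht1
    exact ⟨t0 - t1, by push_cast; linear_combination ht1 - hC⟩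

end LFaux

end LFaux

theorem exists_lattice_preserving_transformation
    (d : ℕ) (hd : 1 ≤ d) (v : Fin (d + 1) → Fin d → ℝ)
    (hLF : SimplexLatticeFace d v) (σ : Equiv.Perm (Fin d)) :
    ∃ (α : Fin d → ℤ) (M : Matrix (Fin d) (Fin d) ℤ),
      (∀ i j : Fin d, j < i → M i j = 0)
      ∧ (∀ i : Fin d, M i i = 1)
      ∧ (∀ (x : Fin d → ℝ) (k : Fin d),
          (α k : ℝ) + ∑ i : Fin d, x i * (M i k : ℝ)
            = (Xtil d v σ ((k : ℕ) + 1) x).det / (Ymat d v σ ((k : ℕ) + 1)).det)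
      ∧ Function.Bijective
          (fun (x : Fin d → ℝ) (k : Fin d) => (α k : ℝ) + ∑ i : Fin d, x i * (M i k : ℝ))
      ∧ Set.BijOn
          (fun (x : Fin d → ℝ) (k : Fin d) => (α k : ℝ) + ∑ i : Fin d, x i * (M i k : ℝ))
          (latticePts d) (latticePts d)  := by
  classical
  have H : ∀ k : Fin d,
      (∃ a : ℤ, LFaux.coefC v σ (k : ℕ) 0
          = (a : ℝ) * (Ymat d v σ ((k : ℕ) + 1)).det) ∧
      ∀ i : Fin d, (i : ℕ) < (k : ℕ) →
        ∃ b : ℤ, LFaux.coefA v σ (k : ℕ) (i : ℕ)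
          = (b : ℝ) * (Ymat d v σ ((k : ℕ) + 1)).det :=
    fun k => LFaux.coef_int v σ hLF (k : ℕ) k.isLt
  choose A hA using fun k => (H k).1
  set M : Matrix (Fin d) (Fin d) ℤ := fun i k =>
    if h : (i : ℕ) < (k : ℕ) then Classical.choose ((H k).2 i h)
    else if i = k then 1 else 0 with hMdef
  have hDy : ∀ k : Fin d, (Ymat d v σ ((k : ℕ) + 1)).det ≠ 0 :=
    fun k => LFaux.detY_ne_zero v σ hLF (k : ℕ) k.isLt
  have hM0 : ∀ i j : Fin d, j < i → M i j = 0 := by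
    intro i j hji
    rw [hMdef]
    simp only
    rw [dif_neg (by omega : ¬ (i : ℕ) < (j : ℕ)), if_neg (by
      intro h; exact absurd (congrArg Fin.val h) (by omega))]
  have hM1 : ∀ i : Fin d, M i i = 1 := by
    intro i
    rw [hMdef]
    simp only
    rw [dif_neg (lt_irrefl _)]
    norm_num
  have hMlt : ∀ (k i : Fin d) (h : (i : ℕ) < (k : ℕ)),
      LFaux.coefA v σ (k : ℕ) (i : ℕ)
        = ((M i k : ℤ) : ℝ) * (Ymat d v σ ((k : ℕ) + 1)).det := by
    intro k i h
    have hs := Classical.choose_spec ((H k).2 i h)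
    rw [hMdef]
    simp only
    rw [dif_pos h]
    exact hs
  have hMgt : ∀ (k i : Fin d), (k : ℕ) < (i : ℕ) → M i k = 0 := by
    intro k i h
    rw [hMdef]
    simp only
    rw [dif_neg (by omega), if_neg (by
      intro hik; exact absurd (congrArg Fin.val hik) (by omega))]
  have hid : ∀ (x : Fin d → ℝ) (k : Fin d),
      (A k : ℝ) + ∑ i : Fin d, x i * ((M i k : ℤ) : ℝ)
        = (Xtil d v σ ((k : ℕ) + 1) x).det / (Ymat d v σ ((k : ℕ) + 1)).det := by
    intro x k
    rw [LFaux.det_Xtil v σ (k : ℕ) k.isLt x, eq_div_iff (hDy k), add_mul,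
      Finset.sum_mul]
    congr 1
    · exact (hA k).symm
    · refine Finset.sum_congr rfl fun i _ => ?_
      rcases lt_trichotomy ((i : ℕ)) ((k : ℕ)) with h | h | h
      · rw [hMlt k i h]
        ring
      · have hik : i = k := Fin.ext h
        subst hik
        rw [hM1 i]
        have hlast : LFaux.coefA v σ (i : ℕ) (i : ℕ) = (Ymat d v σ ((i : ℕ) + 1)).det :=
          LFaux.coefA_last v σ (i : ℕ)
        rw [hlast]
        push_cast
        ring
      · rw [hMgt k i h, LFaux.coefA_zero v σ (k : ℕ) (i : ℕ) (by omega)]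
        push_cast
        ring
  -- invertibility data
  have hdetM : M.det = 1 := by
    have htri : M.BlockTriangular id := fun i j hij => hM0 i j hij
    rw [Matrix.det_of_upperTriangular htri]
    exact Finset.prod_eq_one fun i _ => hM1 i
  have hU : IsUnit M.det := by
    rw [hdetM]; exact isUnit_one
  have hMN : M * M⁻¹ = 1 := Matrix.mul_nonsing_inv M hU
  have hNM : M⁻¹ * M = 1 := Matrix.nonsing_inv_mul M hU
  have hcast : ∀ P Q : Matrix (Fin d) (Fin d) ℤ, P * Q = 1 →
      P.map (fun z : ℤ => (z : ℝ)) * Q.map (fun z : ℤ => (z : ℝ)) = 1 := by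
    intro P Q h
    have h1 : (P * Q).map (⇑(Int.castRingHom ℝ))
        = P.map (⇑(Int.castRingHom ℝ)) * Q.map (⇑(Int.castRingHom ℝ)) :=
      Matrix.map_mul
    rw [h] at h1
    have h2 : (1 : Matrix (Fin d) (Fin d) ℤ).map (⇑(Int.castRingHom ℝ)) = 1 :=
      Matrix.map_one _ (by simp) (by simp)
    rw [h2] at h1
    exact h1.symm
  set Ar : Matrix (Fin d) (Fin d) ℝ := M.map (fun z : ℤ => (z : ℝ)) with hAr
  set Nr : Matrix (Fin d) (Fin d) ℝ := (M⁻¹).map (fun z : ℤ => (z : ℝ)) with hNr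
  have hArNr : Ar * Nr = 1 := hcast _ _ hMN
  have hNrAr : Nr * Ar = 1 := hcast _ _ hNM
  set Tf : (Fin d → ℝ) → (Fin d → ℝ) :=
    fun x k => (A k : ℝ) + ∑ i : Fin d, x i * ((M i k : ℤ) : ℝ) with hTfdef
  set S : (Fin d → ℝ) → (Fin d → ℝ) :=
    fun y => Matrix.vecMul (fun i => y i - (A i : ℝ)) Nr with hSdef
  have hTf' : ∀ (x : Fin d → ℝ) (k : Fin d),
      Tf x k = (A k : ℝ) + Matrix.vecMul x Ar k := by
    intro x k
    rw [hTfdef]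
    simp only [Matrix.vecMul, dotProduct, hAr, Matrix.map_apply]
  have hleft : ∀ x, S (Tf x) = x := by
    intro x
    rw [hSdef]
    simp only
    have h1 : (fun i => Tf x i - (A i : ℝ)) = Matrix.vecMul x Ar := by
      funext i
      rw [hTf']
      ring
    rw [h1, Matrix.vecMul_vecMul, hArNr, Matrix.vecMul_one]
  have hright : ∀ y, Tf (S y) = y := by
    intro y
    funext k
    rw [hTf']
    have h2 : Matrix.vecMul (S y) Ar = fun i => y i - (A i : ℝ) := by
      rw [hSdef]
      simp only
      rw [Matrix.vecMul_vecMul, hNrAr, Matrix.vecMul_one]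
    rw [h2]
    ring
  have hbij : Function.Bijective Tf :=
    Function.bijective_iff_has_inverse.mpr ⟨S, hleft, hright⟩
  have hmapsT : ∀ x ∈ latticePts d, Tf x ∈ latticePts d := by
    intro x hx k
    choose nx hnx using hx
    refine ⟨A k + ∑ i : Fin d, nx i * M i k, ?_⟩
    have h3 : Tf x k = (A k : ℝ) + ∑ i : Fin d, ((nx i : ℤ) : ℝ) * ((M i k : ℤ) : ℝ) := by
      rw [hTfdef]
      simp only
      rw [Finset.sum_congr rfl (fun i _ => by rw [hnx i])]
    rw [h3]
    push_cast
    ring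
  have hmapsS : ∀ y ∈ latticePts d, S y ∈ latticePts d := by
    intro y hy k
    choose ny hny using hy
    refine ⟨∑ i : Fin d, (ny i - A i) * (M⁻¹) i k, ?_⟩
    rw [hSdef]
    simp only [Matrix.vecMul, dotProduct, hNr, Matrix.map_apply]
    rw [Finset.sum_congr rfl (fun i _ => by rw [hny i])]
    push_cast
    ring
  refine ⟨A, M, hM0, hM1, hid, hbij, hmapsT, ?_, ?_⟩
  · exact hbij.injective.injOn
  · intro y hy
    exact ⟨S y, hmapsS y hy, hright y⟩
end
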